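/- arXiv:1209.4398 — 3 statements merged into one kernel-verified Lean document; each statement's English description precedes it below -/
import Mathlib

section
/- Let Γ = (C, X, H, I, η, E) be a Galois structure satisfying: (E4) if g ∘ f ∈ E then g ∈ E; (E5) every split epimorphism in Ext(C) lies in E¹; (M) every morphism in E is a monadic extension; and (B) X is strongly E-Birkhoff. Then Γ is admissible: every functor H^B : (X ↓ I(B)) → (C ↓ B), given by pulling back along η_B, is fully faithful. -/
open CategoryTheory CategoryTheory.Limits

universe v u v' u'

namespace GaloisPaper

variable {C : Type u} [Category.{v} C]

/-- The class `E¹` of "double extensions" relative to a class `F` of morphisms: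
a commutative square (i.e. a morphism `σ : a ⟶ b` of the arrow category) with all
four arrows in `F`, such that the comparison morphism to the pullback lies in `F`. -/
def InE1 (F : MorphismProperty C) : MorphismProperty (Arrow C) := fun a b σ =>
  F a.hom ∧ F b.hom ∧ F σ.left ∧ F σ.right ∧
    ∃ (P : C) (p₁ : P ⟶ a.right) (p₂ : P ⟶ b.left) (l : a.left ⟶ P),
      IsPullback p₁ p₂ σ.right b.hom ∧ l ≫ p₁ = a.hom ∧ l ≫ p₂ = σ.left ∧ F l

/-- (E1): `F` contains all isomorphisms (between objects satisfying `O`). -/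
def CondE1 (O : C → Prop) (F : MorphismProperty C) : Prop :=
  ∀ ⦃a b : C⦄ (σ : a ⟶ b), O a → O b → IsIso σ → F σ

/-- (E2): `F` is pullback-stable: pullbacks of morphisms of `F` along arbitrary
morphisms (between objects satisfying `O`) exist and lie in `F`. -/
def CondE2 (O : C → Prop) (F : MorphismProperty C) : Prop :=
  ∀ ⦃a b : C⦄ (σ : a ⟶ b), F σ → ∀ ⦃c : C⦄ (g : c ⟶ b), O c →
    (∃ (d : C) (q₁ : d ⟶ a) (q₂ : d ⟶ c), O d ∧ IsPullback q₁ q₂ σ g ∧ F q₂) ∧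
    (∀ ⦃d : C⦄ (q₁ : d ⟶ a) (q₂ : d ⟶ c), O d → IsPullback q₁ q₂ σ g → F q₂)

/-- (E3): `F` is closed under composition. -/
def CondE3 (F : MorphismProperty C) : Prop :=
  ∀ ⦃a b c : C⦄ (σ : a ⟶ b) (τ : b ⟶ c), F σ → F τ → F (σ ≫ τ)

/-- (E4): if `σ ≫ τ ∈ F` then `τ ∈ F`. -/
def CondE4 (O : C → Prop) (F : MorphismProperty C) : Prop :=
  ∀ ⦃a b c : C⦄ (σ : a ⟶ b) (τ : b ⟶ c), O a → O b → O c → F (σ ≫ τ) → F τ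

/-- (E5): every split epimorphism of `Ext(C)` (i.e. every morphism of the arrow
category between `F`-arrows admitting a section) lies in `F¹`. -/
def CondE5 (F : MorphismProperty C) : Prop :=
  ∀ ⦃a b : Arrow C⦄ (σ : a ⟶ b) (τ : b ⟶ a), τ ≫ σ = 𝟙 b → F a.hom → F b.hom → InE1 F σ

/-- `(C ↓ B)`: the full subcategory of `Over B` on morphisms in `F`. -/
def EOver (F : MorphismProperty C) (B : C) :=
  ObjectProperty.FullSubcategory (fun f : Over B => F f.hom)

instance (F : MorphismProperty C) (B : C) : Category (EOver F B) :=
  ObjectProperty.FullSubcategory.category _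

/-- `Σ_p`: composition with `p`, as a functor `(C ↓ A) ⥤ (C ↓ B)`. -/
def eMap (F : MorphismProperty C) {A B : C} (p : A ⟶ B)
    (hcomp : ∀ ⦃Z : C⦄ (f : Z ⟶ A), F f → F (f ≫ p)) : EOver F A ⥤ EOver F B :=
  ObjectProperty.lift _ (ObjectProperty.ι _ ⋙ Over.map p)
    (fun f => hcomp f.obj.hom f.property)

/-- `p` is a monadic extension (effective `F`-descent morphism): `p ∈ F` and the
pullback functor `p* : (C ↓ B) ⥤ (C ↓ A)` (i.e. the right adjoint of `Σ_p`) is monadic. -/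
def IsMonadicExt (F : MorphismProperty C) {A B : C} (p : A ⟶ B) : Prop :=
  F p ∧ ∃ (hcomp : ∀ ⦃Z : C⦄ (f : Z ⟶ A), F f → F (f ≫ p))
    (G : EOver F B ⥤ EOver F A) (_ : eMap F p hcomp ⊣ G),
    Nonempty (MonadicRightAdjoint G)

/-- `u : e ⟶ r` exhibits `r` as a reflection of `e` into the full subcategory
determined by `P`. -/
def IsReflectionInto {D : Type u'} [Category.{v'} D] (P : D → Prop) {e r : D}
    (u : e ⟶ r) : Prop :=
  P r ∧ ∀ ⦃a : D⦄, P a → ∀ k : e ⟶ a, ∃! m : r ⟶ a, u ≫ m = k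

/-- A Galois structure `(C, X, H, I, η, E)` as in Janelidze–Kelly: a full replete
reflective subcategory together with a class `E` satisfying (E1)–(E3) and (G). -/
structure GaloisStructure (C : Type u) [Category.{v} C] (X : Type u') [Category.{v'} X] where
  H : X ⥤ C
  I : C ⥤ X
  adj : I ⊣ H
  hFull : H.Full
  hFaithful : H.Faithful
  E : MorphismProperty C
  hE1 : CondE1 (fun _ => True) E
  hE2 : CondE2 (fun _ => True) E
  hE3 : CondE3 E
  hG : ∀ ⦃A B : C⦄ (f : A ⟶ B), E f → E (H.map (I.map f))

namespace GaloisStructure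

variable {X : Type u'} [Category.{v'} X] (Γ : GaloisStructure C X)

/-- The component `η_A : A ⟶ HI(A)` of the reflection unit. -/
def unitApp (A : C) : A ⟶ Γ.H.obj (Γ.I.obj A) := Γ.adj.unit.app A

/-- A trivial covering: `f ∈ E` whose `η`-naturality square is a pullback. -/
def TrivCov {A B : C} (f : A ⟶ B) : Prop :=
  Γ.E f ∧ IsPullback (Γ.unitApp A) f (Γ.H.map (Γ.I.map f)) (Γ.unitApp B)

/-- `f` is split by `p`: the pullback `p*(f)` of `f` along `p` is a trivial covering. -/
def IsSplitBy {A B E' : C} (f : A ⟶ B) (p : E' ⟶ B) : Prop :=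
  ∀ ⦃P : C⦄ (p₁ : P ⟶ A) (p₂ : P ⟶ E'), IsPullback p₁ p₂ f p → Γ.TrivCov p₂

/-- A covering (central extension): a morphism of `E` split by some monadic extension. -/
def Covering {A B : C} (f : A ⟶ B) : Prop :=
  Γ.E f ∧ ∃ (E' : C) (p : E' ⟶ B), IsMonadicExt Γ.E p ∧ Γ.IsSplitBy f p

/-- A normal extension: a monadic extension split by itself. -/
def NormalExt {A B : C} (p : A ⟶ B) : Prop :=
  IsMonadicExt Γ.E p ∧ Γ.IsSplitBy p p

/-- (M): every morphism of `E` is a monadic extension. -/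
def CondM : Prop := ∀ ⦃A B : C⦄ (p : A ⟶ B), Γ.E p → IsMonadicExt Γ.E p

/-- Admissibility of the Galois structure: the right adjoints
`H^B : (X ↓ I(B)) ⥤ (C ↓ B)` are fully faithful.  Equivalently (and this is how we
state it), for every `φ : x ⟶ I(B)` with `H(φ) ∈ E` and every pullback of `H(φ)`
along `η_B`, the corresponding component of the counit of `I^B ⊣ H^B`, i.e. the
adjoint transpose `I(A) ⟶ x` of `t : A ⟶ H(x)`, is an isomorphism. -/
def Admissible : Prop :=
  ∀ ⦃B : C⦄ ⦃x : X⦄ (φ : x ⟶ Γ.I.obj B), Γ.E (Γ.H.map φ) →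
    ∀ ⦃A : C⦄ (t : A ⟶ Γ.H.obj x) (f : A ⟶ B),
      IsPullback t f (Γ.H.map φ) (Γ.unitApp B) →
      IsIso ((Γ.adj.homEquiv A x).symm t)

/-- The `η`-naturality square at `f`, as a morphism of the arrow category. -/
def unitSq {A B : C} (f : A ⟶ B) : Arrow.mk f ⟶ Arrow.mk (Γ.H.map (Γ.I.map f)) :=
  Arrow.homMk (u := Γ.unitApp A) (v := Γ.unitApp B)
    (by simp [unitApp])

/-- (B): `X` is a strongly `E`-Birkhoff subcategory of `C`: every `η`-naturality
square at a morphism of `E` lies in `E¹`. -/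
def StronglyBirkhoff : Prop :=
  ∀ ⦃A B : C⦄ (f : A ⟶ B), Γ.E f → InE1 Γ.E (Γ.unitSq f)

/-- `I` preserves pullbacks of morphisms of `E` along split epimorphisms of `E`. -/
def PreservesSplitPullbacks : Prop :=
  ∀ ⦃D' A B C' : C⦄ (t : D' ⟶ A) (h : D' ⟶ C') (f : A ⟶ B) (g : C' ⟶ B),
    IsPullback t h f g → Γ.E f → Γ.E g → IsSplitEpi g →
    IsPullback (Γ.I.map t) (Γ.I.map h) (Γ.I.map f) (Γ.I.map g)

end GaloisStructure

/-- The class of regular epimorphisms. -/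
def regEpi (C : Type u) [Category.{v} C] : MorphismProperty C :=
  fun _ _ f => Nonempty (RegularEpi f)

/-- A pair of parallel morphisms is jointly monic. -/
def JointlyMono {R A : C} (d₀ d₁ : R ⟶ A) : Prop :=
  ∀ ⦃T : C⦄ (x y : T ⟶ R), x ≫ d₀ = y ≫ d₀ → x ≫ d₁ = y ≫ d₁ → x = y

/-- An internal reflexive relation (given by its jointly monic pair of projections). -/
def IsReflexiveRel {R A : C} (d₀ d₁ : R ⟶ A) : Prop :=
  JointlyMono d₀ d₁ ∧ ∃ r : A ⟶ R, r ≫ d₀ = 𝟙 A ∧ r ≫ d₁ = 𝟙 A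

/-- An internal equivalence relation. -/
def IsEquivRel {R A : C} (d₀ d₁ : R ⟶ A) : Prop :=
  IsReflexiveRel d₀ d₁ ∧ (∃ s : R ⟶ R, s ≫ d₀ = d₁ ∧ s ≫ d₁ = d₀) ∧
    ∀ ⦃T : C⦄ (x y : T ⟶ R), x ≫ d₁ = y ≫ d₀ →
      ∃ t : T ⟶ R, t ≫ d₀ = x ≫ d₀ ∧ t ≫ d₁ = y ≫ d₁

/-- A Mal'tsev category: every internal reflexive relation is an equivalence relation. -/
def IsMaltsevCat (C : Type u) [Category.{v} C] : Prop :=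
  ∀ ⦃A R : C⦄ (d₀ d₁ : R ⟶ A), IsReflexiveRel d₀ d₁ → IsEquivRel d₀ d₁

/-- A regular category: finite limits (assumed separately), regular epi–mono
factorisations, and pullback-stability of regular epimorphisms. -/
structure IsRegularCategory (C : Type u) [Category.{v} C] : Prop where
  factor : ∀ ⦃A B : C⦄ (f : A ⟶ B), ∃ (I' : C) (e : A ⟶ I') (m : I' ⟶ B),
    f = e ≫ m ∧ Nonempty (RegularEpi e) ∧ Mono m
  stable : ∀ ⦃P' X' Y' Z' : C⦄ (p₁ : P' ⟶ X') (p₂ : P' ⟶ Y') (f : X' ⟶ Z') (g : Y' ⟶ Z'),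
    IsPullback p₁ p₂ f g → Nonempty (RegularEpi f) → Nonempty (RegularEpi p₂)

/-- A Barr-exact category: regular, and every internal equivalence relation is
effective (i.e. a kernel pair). -/
def IsBarrExact (C : Type u) [Category.{v} C] : Prop :=
  IsRegularCategory C ∧ ∀ ⦃A R : C⦄ (d₀ d₁ : R ⟶ A), IsEquivRel d₀ d₁ →
    ∃ (Q : C) (q : A ⟶ Q), IsPullback d₀ d₁ q q

/-- A Birkhoff subcategory: a full reflective subcategory closed under subobjects
and regular quotient objects. -/
structure IsBirkhoff {X : Type u'} [Category.{v'} X] (H : X ⥤ C) (I : C ⥤ X)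
    (adj : I ⊣ H) : Prop where
  full : H.Full
  faithful : H.Faithful
  closedSub : ∀ (x : X) (A : C) (m : A ⟶ H.obj x), Mono m → ∃ y : X, Nonempty (A ≅ H.obj y)
  closedQuot : ∀ (x : X) (A : C) (e : H.obj x ⟶ A), Nonempty (RegularEpi e) →
    ∃ y : X, Nonempty (A ≅ H.obj y)

/-- The category `Ext(C)` of `F`-morphisms. -/
def ExtCat (F : MorphismProperty C) := ObjectProperty.FullSubcategory (fun a : Arrow C => F a.hom)

instance (F : MorphismProperty C) : Category (ExtCat F) := ObjectProperty.FullSubcategory.category _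

/-- The restriction of `F¹` to the category `Ext(C)`. -/
def ExtE1 (F : MorphismProperty C) : MorphismProperty (ExtCat F) :=
  fun _ _ σ => InE1 F ((ObjectProperty.ι _).map σ)


section Aux11

variable {D : Type*} [Category D] {D' : Type*} [Category D']

/-- A monadic right adjoint is faithful. -/
lemma faithful_of_monadic (G : D ⥤ D') (mon : MonadicRightAdjoint G) : G.Faithful := by
  haveI := mon.eqv
  exact Functor.Faithful.of_iso (Monad.comparisonForget mon.adj)

/-- A monadic right adjoint reflects isomorphisms. -/
lemma isIso_of_monadic_map (G : D ⥤ D') (mon : MonadicRightAdjoint G) {X Y : D} (f : X ⟶ Y)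
    (h : IsIso (G.map f)) : IsIso f := by
  haveI := mon.eqv
  haveI : IsIso ((Monad.comparison mon.adj ⋙ mon.adj.toMonad.forget).map f) :=
    (NatIso.isIso_map_iff (Monad.comparisonForget mon.adj) f).mpr h
  exact isIso_of_reflects_iso f (Monad.comparison mon.adj ⋙ mon.adj.toMonad.forget)

end Aux11

section EOverAux

variable {F : MorphismProperty C} {B : C}

/-- The underlying morphism of `C` of a morphism of `EOver F B`. -/
def eleft {X Y : EOver F B} (u : X ⟶ Y) : X.obj.left ⟶ Y.obj.left :=
  CommaMorphism.left (u.hom : X.obj ⟶ Y.obj)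

lemma eleft_comp {X Y Z : EOver F B} (u : X ⟶ Y) (v : Y ⟶ Z) :
    eleft (u ≫ v) = eleft u ≫ eleft v := rfl

lemma eleft_id (X : EOver F B) : eleft (𝟙 X) = 𝟙 X.obj.left := rfl

lemma eleft_w {X Y : EOver F B} (u : X ⟶ Y) : eleft u ≫ Y.obj.hom = X.obj.hom :=
  Over.w (u.hom : X.obj ⟶ Y.obj)

lemma EOver.hom_ext {X Y : EOver F B} (u v : X ⟶ Y) (h : eleft u = eleft v) : u = v :=
  ObjectProperty.hom_ext _ (Over.OverMorphism.ext h)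

lemma eMap_obj_hom {A : C} (p : A ⟶ B)
    (hcomp : ∀ ⦃Z : C⦄ (f : Z ⟶ A), F f → F (f ≫ p)) (X : EOver F A) :
    ((eMap F p hcomp).obj X).obj.hom = X.obj.hom ≫ p := rfl

lemma eMap_map_eleft {A : C} (p : A ⟶ B)
    (hcomp : ∀ ⦃Z : C⦄ (f : Z ⟶ A), F f → F (f ≫ p)) {X Y : EOver F A} (u : X ⟶ Y) :
    eleft ((eMap F p hcomp).map u) = eleft u := rfl

end EOverAux

section Cancel

variable {F : MorphismProperty C}

/-- The counit trick: a monadic extension may be cancelled on the left against morphisms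
out of the identity object of the slice. -/
lemma monadicExt_cancel {A P : C} {p : A ⟶ P} (hp : IsMonadicExt F p) (hidP : F (𝟙 P))
    (W : EOver F P) (x y : (⟨Over.mk (𝟙 P), hidP⟩ : EOver F P) ⟶ W)
    (h : p ≫ eleft x = p ≫ eleft y) : x = y := by
  obtain ⟨hpE, hcomp, G, adjp, ⟨mon⟩⟩ := hp
  haveI : G.Faithful := faithful_of_monadic G mon
  let oP : EOver F P := ⟨Over.mk (𝟙 P), hidP⟩
  apply G.map_injective
  have key : ∀ u : oP ⟶ W,
      G.map u = (adjp.homEquiv (G.obj oP) W) (adjp.counit.app oP ≫ u) := by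
    intro u
    rw [Adjunction.homEquiv_unit, G.map_comp, ← Category.assoc,
      adjp.right_triangle_components, Category.id_comp]
  rw [key x, key y]
  congr 1
  apply EOver.hom_ext
  have hw : eleft (adjp.counit.app oP) = (G.obj oP).obj.hom ≫ p := by
    have h1 : eleft (adjp.counit.app oP) ≫ 𝟙 P = (G.obj oP).obj.hom ≫ p := eleft_w _
    exact (Category.comp_id _).symm.trans h1
  rw [eleft_comp, eleft_comp, hw]
  exact (Category.assoc _ _ _).trans ((congrArg _ h).trans (Category.assoc _ _ _).symm)

/-- Every monadic extension is an epimorphism with respect to morphisms over a common base. -/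
lemma monadicExt_cancel' (hE1 : CondE1 (fun _ => True) F) (hE2 : CondE2 (fun _ => True) F)
    {A P Z B' : C} {l : A ⟶ P} (hl : IsMonadicExt F l)
    {z : Z ⟶ B'} (hz : F z) {g : P ⟶ B'} {x y : P ⟶ Z}
    (hx : x ≫ z = g) (hy : y ≫ z = g) (h : l ≫ x = l ≫ y) : x = y := by
  obtain ⟨d, q₁, q₂, -, hq, hq₂⟩ := (hE2 z hz g trivial).1
  have hidP : F (𝟙 P) := hE1 (𝟙 P) trivial trivial inferInstance
  have hx' : x ≫ z = 𝟙 P ≫ g := by rw [Category.id_comp, hx]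
  have hy' : y ≫ z = 𝟙 P ≫ g := by rw [Category.id_comp, hy]
  let x₀ := hq.lift x (𝟙 P) hx'
  let y₀ := hq.lift y (𝟙 P) hy'
  let W : EOver F P := ⟨Over.mk q₂, hq₂⟩
  let x' : (⟨Over.mk (𝟙 P), hidP⟩ : EOver F P) ⟶ W := ObjectProperty.homMk (Over.homMk x₀ (hq.lift_snd _ _ _))
  let y' : (⟨Over.mk (𝟙 P), hidP⟩ : EOver F P) ⟶ W := ObjectProperty.homMk (Over.homMk y₀ (hq.lift_snd _ _ _))
  have hxy : x' = y' := by
    apply monadicExt_cancel hl hidP W x' y'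
    show l ≫ x₀ = l ≫ y₀
    apply hq.hom_ext
    · rw [Category.assoc, Category.assoc]
      rw [show x₀ ≫ q₁ = x from hq.lift_fst _ _ _, show y₀ ≫ q₁ = y from hq.lift_fst _ _ _, h]
    · rw [Category.assoc, Category.assoc]
      rw [show x₀ ≫ q₂ = 𝟙 P from hq.lift_snd _ _ _, show y₀ ≫ q₂ = 𝟙 P from hq.lift_snd _ _ _]
  have hxy₀ : x₀ = y₀ := congrArg eleft hxy
  calc x = x₀ ≫ q₁ := (hq.lift_fst _ _ _).symm
    _ = y₀ ≫ q₁ := by rw [hxy₀]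
    _ = y := hq.lift_fst _ _ _

end Cancel

section Represent

variable {F : MorphismProperty C}

/-- If `τ : Σ_η oA ⟶ W` exhibits `oA` as the pullback of `W` along `η`, then the
adjoint transpose of `τ` is an isomorphism `oA ≅ G W`. -/
lemma isIso_homEquiv_of_isPullback {Bc HB : C} {η : Bc ⟶ HB}
    {hcomp : ∀ ⦃Z : C⦄ (f : Z ⟶ Bc), F f → F (f ≫ η)}
    {G : EOver F HB ⥤ EOver F Bc} (adjη : eMap F η hcomp ⊣ G)
    (oA : EOver F Bc) (W : EOver F HB)
    (τ : (eMap F η hcomp).obj oA ⟶ W)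
    (hpb : IsPullback (eleft τ) oA.obj.hom W.obj.hom η) :
    IsIso ((adjη.homEquiv oA W) τ) := by
  let t : oA.obj.left ⟶ W.obj.left := eleft τ
  have hpb' : IsPullback t oA.obj.hom W.obj.hom η := hpb
  let e : (G.obj W).obj.left ⟶ W.obj.left := eleft (adjη.counit.app W)
  have hεw : e ≫ W.obj.hom = (G.obj W).obj.hom ≫ η := eleft_w (adjη.counit.app W)
  let v₀ : (G.obj W).obj.left ⟶ oA.obj.left := hpb'.lift e (G.obj W).obj.hom hεw
  have hv1 : v₀ ≫ t = e := hpb'.lift_fst _ _ _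
  have hv2 : v₀ ≫ oA.obj.hom = (G.obj W).obj.hom := hpb'.lift_snd _ _ _
  let v : G.obj W ⟶ oA := ObjectProperty.homMk (Over.homMk v₀ hv2)
  have huε : eleft ((adjη.homEquiv oA W) τ) ≫ e = t := by
    have h1 : (eMap F η hcomp).map ((adjη.homEquiv oA W) τ) ≫ adjη.counit.app W = τ := by
      have h0 : (adjη.homEquiv oA W).symm ((adjη.homEquiv oA W) τ) = τ :=
        Equiv.symm_apply_apply _ _
      rw [Adjunction.homEquiv_counit] at h0
      exact h0
    exact congrArg eleft h1
  refine ⟨v, ?_, ?_⟩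
  · apply EOver.hom_ext
    apply hpb'.hom_ext
    · show (eleft ((adjη.homEquiv oA W) τ) ≫ v₀) ≫ t = 𝟙 oA.obj.left ≫ t
      rw [Category.id_comp, Category.assoc, hv1, huε]
    · show (eleft ((adjη.homEquiv oA W) τ) ≫ v₀) ≫ oA.obj.hom = 𝟙 oA.obj.left ≫ oA.obj.hom
      rw [Category.id_comp, Category.assoc, hv2]
      exact eleft_w _
  · apply ((adjη.homEquiv (G.obj W) W).symm).injective
    rw [Adjunction.homEquiv_naturality_left_symm]
    rw [show (adjη.homEquiv oA W).symm ((adjη.homEquiv oA W) τ) = τ from Equiv.symm_apply_apply _ _]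
    rw [Adjunction.homEquiv_counit, CategoryTheory.Functor.map_id, Category.id_comp]
    apply EOver.hom_ext
    exact hv1

end Represent

/-- A Galois structure satisfying (E4), (E5), (M) and (B) is
admissible. -/
theorem statement_11 {C : Type u} [Category.{v} C] {X : Type u'} [Category.{v'} X]
    (Γ : GaloisStructure C X)
    (hE4 : CondE4 (fun _ => True) Γ.E) (hE5 : CondE5 Γ.E)
    (hM : Γ.CondM) (hB : Γ.StronglyBirkhoff) :
    Γ.Admissible := by
  intro B x φ hφ A t f hpb
  haveI := Γ.hFull
  haveI := Γ.hFaithful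
  -- `f ∈ E`
  have hfE : Γ.E f := (Γ.hE2 (Γ.H.map φ) hφ (Γ.unitApp B) trivial).2 t f trivial hpb
  -- `η_B ∈ E`
  have hηB : Γ.E (Γ.unitApp B) := (hB (𝟙 B) (Γ.hE1 (𝟙 B) trivial trivial inferInstance)).2.2.2.1
  -- the strongly Birkhoff square at `f`
  obtain ⟨-, hHIfE', -, -, P, p₁', p₂', l, hP', hl1', hl2', hlE⟩ := hB f hfE
  have hHIfE : Γ.E (Γ.H.map (Γ.I.map f)) := hHIfE'
  let p₁ : P ⟶ B := p₁'
  let p₂ : P ⟶ Γ.H.obj (Γ.I.obj A) := p₂'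
  have hP : IsPullback p₁ p₂ (Γ.unitApp B) (Γ.H.map (Γ.I.map f)) := hP'
  let l₀ : A ⟶ P := l
  have hl1 : l₀ ≫ p₁ = f := hl1'
  have hl2 : l₀ ≫ p₂ = Γ.unitApp A := hl2'
  have hlE₀ : Γ.E l₀ := hlE
  -- the candidate inverse data
  let σ₀ : Γ.I.obj A ⟶ x := (Γ.adj.homEquiv A x).symm t
  let m : Γ.H.obj (Γ.I.obj A) ⟶ Γ.H.obj x := Γ.H.map σ₀
  have hm1 : Γ.unitApp A ≫ m = t := by
    have h1 := (Γ.adj.homEquiv A x).apply_symm_apply t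
    rw [Adjunction.homEquiv_unit] at h1
    exact h1
  have hσφ : σ₀ ≫ φ = Γ.I.map f := by
    refine (Γ.adj.homEquiv A (Γ.I.obj B)).injective ?_
    rw [Γ.adj.homEquiv_naturality_right]
    rw [show (Γ.adj.homEquiv A x) σ₀ = t from (Γ.adj.homEquiv A x).apply_symm_apply t]
    rw [Adjunction.homEquiv_unit]
    have h3 : Γ.adj.unit.app A ≫ Γ.H.map (Γ.I.map f) = f ≫ Γ.unitApp B :=
      (Γ.adj.unit.naturality f).symm
    rw [h3]
    exact hpb.w
  have hmφ : m ≫ Γ.H.map φ = Γ.H.map (Γ.I.map f) := by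
    show Γ.H.map σ₀ ≫ Γ.H.map φ = _
    rw [← Γ.H.map_comp, hσφ]
  -- the section `s : P ⟶ A`
  have hsq : (p₂ ≫ m) ≫ Γ.H.map φ = p₁ ≫ Γ.unitApp B := by
    rw [Category.assoc, hmφ, ← hP.w]
  let s : P ⟶ A := hpb.lift (p₂ ≫ m) p₁ hsq
  have hst : s ≫ t = p₂ ≫ m := hpb.lift_fst _ _ _
  have hsf : s ≫ f = p₁ := hpb.lift_snd _ _ _
  have hls : l₀ ≫ s = 𝟙 A := by
    apply hpb.hom_ext
    · rw [Category.assoc, hst, ← Category.assoc, hl2, hm1, Category.id_comp]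
    · rw [Category.assoc, hsf, hl1, Category.id_comp]
  -- `p₁ ∈ E`
  have hp₁E : Γ.E p₁ :=
    (Γ.hE2 (Γ.H.map (Γ.I.map f)) hHIfE (Γ.unitApp B) trivial).2 p₂ p₁ trivial hP.flip
  -- `s ≫ l = 𝟙 P` by the cancellation property of the monadic extension `l`
  have hsl : s ≫ l₀ = 𝟙 P := by
    refine monadicExt_cancel' Γ.hE1 Γ.hE2 (hM l₀ hlE₀) hp₁E (g := p₁) ?_ ?_ ?_
    · rw [Category.assoc, hl1, hsf]
    · rw [Category.id_comp]
    · rw [← Category.assoc, hls, Category.id_comp, Category.comp_id]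
  -- the adjunction for the monadic extension `η_B`
  obtain ⟨-, hcomp, G, adjB, ⟨mon⟩⟩ := hM (Γ.unitApp B) hηB
  let oA : EOver Γ.E B := ⟨Over.mk f, hfE⟩
  let oP : EOver Γ.E B := ⟨Over.mk p₁, hp₁E⟩
  let Wφ : EOver Γ.E (Γ.H.obj (Γ.I.obj B)) := ⟨Over.mk (Γ.H.map φ), hφ⟩
  let Wf : EOver Γ.E (Γ.H.obj (Γ.I.obj B)) := ⟨Over.mk (Γ.H.map (Γ.I.map f)), hHIfE⟩
  let τA : (eMap Γ.E (Γ.unitApp B) hcomp).obj oA ⟶ Wφ := ObjectProperty.homMk (Over.homMk t hpb.w)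
  let τP : (eMap Γ.E (Γ.unitApp B) hcomp).obj oP ⟶ Wf := ObjectProperty.homMk (Over.homMk p₂ hP.w.symm)
  let uA : oA ⟶ G.obj Wφ := (adjB.homEquiv oA Wφ) τA
  let uP : oP ⟶ G.obj Wf := (adjB.homEquiv oP Wf) τP
  haveI hiA : IsIso uA := isIso_homEquiv_of_isPullback adjB oA Wφ τA hpb
  haveI hiP : IsIso uP := isIso_homEquiv_of_isPullback adjB oP Wf τP hP.flip
  let mbar : Wf ⟶ Wφ := ObjectProperty.homMk (Over.homMk m hmφ)
  let sbar : oP ⟶ oA := ObjectProperty.homMk (Over.homMk s hsf)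
  haveI hisbar : IsIso sbar := by
    refine ⟨ObjectProperty.homMk (Over.homMk l₀ hl1), ?_, ?_⟩
    · exact EOver.hom_ext _ _ hsl
    · exact EOver.hom_ext _ _ hls
  have hnat : uP ≫ G.map mbar = sbar ≫ uA := by
    refine ((adjB.homEquiv oP Wφ).symm).injective ?_
    rw [Adjunction.homEquiv_naturality_right_symm, Adjunction.homEquiv_naturality_left_symm]
    rw [show (adjB.homEquiv oP Wf).symm uP = τP from Equiv.symm_apply_apply _ _]
    rw [show (adjB.homEquiv oA Wφ).symm uA = τA from Equiv.symm_apply_apply _ _]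
    apply EOver.hom_ext
    exact hst.symm
  haveI hGm : IsIso (G.map mbar) := by
    have h4 : G.map mbar = inv uP ≫ (sbar ≫ uA) := by
      rw [← hnat, IsIso.inv_hom_id_assoc]
    rw [h4]
    infer_instance
  have hmbar : IsIso mbar := isIso_of_monadic_map G mon mbar hGm
  have hmiso : IsIso m := by
    obtain ⟨n, hn1, hn2⟩ := hmbar
    refine ⟨eleft n, ?_, ?_⟩
    · exact congrArg eleft hn1
    · exact congrArg eleft hn2
  haveI : IsIso (Γ.H.map σ₀) := hmiso
  exact isIso_of_reflects_iso σ₀ Γ.H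

end GaloisPaper
end

section
/- Let Γ = (C, X, H, I, η, E) be a Galois structure satisfying conditions (E4), (E5), (M) and (B) as above. Then I : C → X preserves every pullback of f ∈ E along a split epimorphism g ∈ E. -/
open CategoryTheory CategoryTheory.Limits

universe v u v' u'

namespace GaloisPaper

variable {C : Type u} [Category.{v} C]

/-! ### Auxiliary lemmas for Statement 12 -/

section Aux

universe w₁ w₂ w₃ w₄

variable {X : Type u'} [Category.{v'} X] (Γ : GaloisStructure C X)

namespace GaloisStructure

/-- Naturality of the unit. -/
lemma unit_natural {A B : C} (f : A ⟶ B) :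
    f ≫ Γ.unitApp B = Γ.unitApp A ≫ Γ.H.map (Γ.I.map f) := by
  simpa [unitApp] using (Γ.adj.unit.naturality f)

lemma mem_id (Z : C) : Γ.E (𝟙 Z) := Γ.hE1 (𝟙 Z) trivial trivial inferInstance

lemma mem_iso {A B : C} (e : A ⟶ B) [IsIso e] : Γ.E e := Γ.hE1 e trivial trivial inferInstance

/-- Strong Birkhoffness implies all unit components are extensions. -/
lemma unit_mem (hB : Γ.StronglyBirkhoff) (Z : C) : Γ.E (Γ.unitApp Z) :=
  (hB (𝟙 Z) (Γ.mem_id Z)).2.2.1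

/-- Precomposition with the unit is injective on maps into the subcategory. -/
lemma unit_cancel {Z : C} {x : X} {β₁ β₂ : Γ.H.obj (Γ.I.obj Z) ⟶ Γ.H.obj x}
    (hβ : Γ.unitApp Z ≫ β₁ = Γ.unitApp Z ≫ β₂) : β₁ = β₂ := by
  haveI := Γ.hFull; haveI := Γ.hFaithful
  obtain ⟨γ₁, rfl⟩ := Γ.H.map_surjective β₁
  obtain ⟨γ₂, rfl⟩ := Γ.H.map_surjective β₂
  have h : (Γ.adj.homEquiv Z x) γ₁ = (Γ.adj.homEquiv Z x) γ₂ := by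
    simpa [Adjunction.homEquiv_unit, unitApp] using hβ
  rw [(Γ.adj.homEquiv Z x).injective h]

end GaloisStructure

/-- Monadic right adjoints reflect isomorphisms. -/
lemma monadic_reflectsIso {D₁ : Type w₁} [Category.{w₂} D₁] {D₂ : Type w₃} [Category.{w₄} D₂]
    (G : D₁ ⥤ D₂) (mon : MonadicRightAdjoint G) {x y : D₁} (ψ : x ⟶ y)
    (hiso : IsIso (G.map ψ)) : IsIso ψ := by
  haveI : MonadicRightAdjoint G := mon
  haveI : IsIso (((Monad.comparison (monadicAdjunction G)).map ψ).f) := hiso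
  haveI : IsIso ((Monad.comparison (monadicAdjunction G)).map ψ) :=
    Monad.algebra_iso_of_iso _ _
  exact isIso_of_fully_faithful (Monad.comparison (monadicAdjunction G)) ψ

namespace GaloisStructure

/-- Members of `E` which are monomorphisms are isomorphisms. -/
lemma isIso_of_mono_of_mem (hM : Γ.CondM) {U V : C} (m : U ⟶ V) (hm : Γ.E m)
    (hmono : Mono m) : IsIso m := by
  obtain ⟨hmE, hcomp, G, adjp, ⟨mon⟩⟩ := hM m hm
  let Xo : EOver Γ.E V := ⟨Over.mk m, hm⟩
  let Yo : EOver Γ.E V := ⟨Over.mk (𝟙 V), Γ.mem_id V⟩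
  let Ψ : Xo ⟶ Yo := ObjectProperty.homMk (Over.homMk m (Category.comp_id m))
  let Sp := eMap Γ.E m hcomp
  -- the underlying morphism of the counit at `Yo`
  have wY : (adjp.counit.app Yo).hom.left = (G.obj Yo).obj.hom ≫ m := by
    have h : (adjp.counit.app Yo).hom.left ≫ 𝟙 V = (G.obj Yo).obj.hom ≫ m :=
      Over.w (adjp.counit.app Yo).hom
    exact (Category.comp_id _).symm.trans h
  -- candidate inverse of `G.map Ψ`
  let χ₀ : Sp.obj (G.obj Yo) ⟶ Xo := ObjectProperty.homMk <| Over.homMk ((G.obj Yo).obj.hom) (by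
    show (G.obj Yo).obj.hom ≫ m = ((Over.map m).obj (G.obj Yo).obj).hom
    simp)
  let χ : G.obj Yo ⟶ G.obj Xo := adjp.homEquiv _ _ χ₀
  have claim1 : χ ≫ G.map Ψ = 𝟙 (G.obj Yo) := by
    apply (adjp.homEquiv (G.obj Yo) Yo).symm.injective
    rw [Adjunction.homEquiv_naturality_right_symm, Adjunction.homEquiv_symm_id,
      Equiv.symm_apply_apply]
    apply ObjectProperty.hom_ext
    apply Over.OverMorphism.ext
    show (G.obj Yo).obj.hom ≫ m = (adjp.counit.app Yo).hom.left
    rw [wY]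
  have claim2 : G.map Ψ ≫ χ = 𝟙 (G.obj Xo) := by
    apply (adjp.homEquiv (G.obj Xo) Xo).symm.injective
    rw [Adjunction.homEquiv_naturality_left_symm, Adjunction.homEquiv_symm_id,
      Equiv.symm_apply_apply]
    apply ObjectProperty.hom_ext
    apply Over.OverMorphism.ext
    show (Sp.map (G.map Ψ)).hom.left ≫ (G.obj Yo).obj.hom = (adjp.counit.app Xo).hom.left
    have h1 : (Sp.map (G.map Ψ)).hom.left = (G.map Ψ).hom.left := rfl
    have h2 : (G.map Ψ).hom.left ≫ (G.obj Yo).obj.hom = (G.obj Xo).obj.hom :=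
      Over.w (G.map Ψ).hom
    have h3 : (adjp.counit.app Xo).hom.left ≫ m = (G.obj Xo).obj.hom ≫ m := by
      exact Over.w (adjp.counit.app Xo).hom
    rw [h1]
    exact h2.trans (hmono.right_cancellation _ _ h3).symm
  have hGiso : IsIso (G.map Ψ) := ⟨χ, claim2, claim1⟩
  have hΨ : IsIso Ψ := monadic_reflectsIso G mon Ψ hGiso
  have : IsIso ((ObjectProperty.ι _ ⋙ Over.forget V).map Ψ) := Functor.map_isIso _ Ψ
  exact this

/-- Descent of sections along a monadic extension. -/
lemma descent_glue {A₀ B₀ : C} (p : A₀ ⟶ B₀) (hp : IsMonadicExt Γ.E p)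
    {Z' : C} (z' : Z' ⟶ B₀) (hz' : Γ.E z') (ξ : A₀ ⟶ Z') (hξ : ξ ≫ z' = p)
    {K : C} (k₁ k₂ : K ⟶ A₀) (hK : IsPullback k₁ k₂ p p) (hcoc : k₁ ≫ ξ = k₂ ≫ ξ) :
    ∃ r : B₀ ⟶ Z', r ≫ z' = 𝟙 B₀ ∧ p ≫ r = ξ := by
  obtain ⟨hpE, hcomp, G, adjp, ⟨mon⟩⟩ := hp
  haveI : MonadicRightAdjoint G := mon
  let Sp := eMap Γ.E p hcomp
  let X₀ : EOver Γ.E B₀ := ⟨Over.mk (𝟙 B₀), Γ.mem_id B₀⟩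
  let Y : EOver Γ.E B₀ := ⟨Over.mk z', hz'⟩
  let gx : (G.obj X₀).obj.left ⟶ A₀ := (G.obj X₀).obj.hom
  -- the local morphism
  let ρ : Sp.obj (G.obj X₀) ⟶ Y := ObjectProperty.homMk <| Over.homMk (gx ≫ ξ) (by
    show (gx ≫ ξ) ≫ z' = ((Over.map p).obj (G.obj X₀).obj).hom
    simp [hξ, gx])
  -- `ρ` coequalizes the Beck pair
  have hd : adjp.counit.app (Sp.obj (G.obj X₀)) ≫ ρ
      = Sp.map (G.map (adjp.counit.app X₀)) ≫ ρ := by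
    apply ObjectProperty.hom_ext
    apply Over.OverMorphism.ext
    show (adjp.counit.app (Sp.obj (G.obj X₀))).hom.left ≫ (gx ≫ ξ)
      = (G.map (adjp.counit.app X₀)).hom.left ≫ (gx ≫ ξ)
    set α := (adjp.counit.app (Sp.obj (G.obj X₀))).hom.left with hα'
    set β := (G.map (adjp.counit.app X₀)).hom.left with hβ'
    set v := (G.obj (Sp.obj (G.obj X₀))).obj.hom with hv'
    have hβ : β ≫ gx = v :=
      Over.w (G.map (adjp.counit.app X₀)).hom
    have hα : α ≫ (gx ≫ p) = v ≫ p := by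
      exact Over.w (adjp.counit.app (Sp.obj (G.obj X₀))).hom
    have hαp : (α ≫ gx) ≫ p = v ≫ p := (Category.assoc _ _ _).trans hα
    have hlift₁ : hK.lift (α ≫ gx) v hαp ≫ k₁ = α ≫ gx := hK.lift_fst _ _ _
    have hlift₂ : hK.lift (α ≫ gx) v hαp ≫ k₂ = v := hK.lift_snd _ _ _
    exact (Category.assoc _ _ _).symm.trans ((congrArg (· ≫ ξ) hlift₁.symm).trans
      ((Category.assoc _ _ _).trans ((congrArg (hK.lift (α ≫ gx) v hαp ≫ ·) hcoc).trans
        ((Category.assoc _ _ _).symm.trans ((congrArg (· ≫ ξ) (hlift₂.trans hβ.symm)).trans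
          (Category.assoc _ _ _))))))
  -- the corresponding would-be `G`-image
  let φ : G.obj X₀ ⟶ G.obj Y := adjp.homEquiv _ _ ρ
  have hsymmφ : (adjp.homEquiv _ _).symm φ = ρ := Equiv.symm_apply_apply _ _
  -- key algebra compatibility, relative to `adjp`
  have key : G.map (Sp.map φ ≫ adjp.counit.app Y) = G.map (adjp.counit.app X₀) ≫ φ := by
    apply (adjp.homEquiv _ _).symm.injective
    have e1 : G.map (Sp.map φ ≫ adjp.counit.app Y)
        = 𝟙 _ ≫ G.map (Sp.map φ ≫ adjp.counit.app Y) := (Category.id_comp _).symm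
    rw [e1, Adjunction.homEquiv_naturality_right_symm, Adjunction.homEquiv_symm_id,
      Adjunction.homEquiv_naturality_left_symm]
    simp only [Functor.id_obj]
    have e2 : Sp.map φ ≫ adjp.counit.app Y = ρ := by
      have := adjp.homEquiv_counit (X := G.obj X₀) (g := φ)
      rw [← this, hsymmφ]
    rw [e2, hsymmφ]
    exact hd
  -- the canonical iso between the two left adjoints
  let κ := Adjunction.leftAdjointUniq adjp (monadicAdjunction G)
  have hcounit : ∀ S : EOver Γ.E B₀, (monadicAdjunction G).counit.app S =
      κ.inv.app (G.obj S) ≫ adjp.counit.app S := by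
    intro S
    rw [← Adjunction.leftAdjointUniq_hom_app_counit adjp (monadicAdjunction G) S,
      ← Category.assoc, Iso.inv_hom_id_app, Category.id_comp]
  -- build the algebra morphism and glue
  let KF := Monad.comparison (monadicAdjunction G)
  have hfield : (monadicAdjunction G).toMonad.map φ ≫ (KF.obj Y).a = (KF.obj X₀).a ≫ φ := by
    show G.map ((monadicLeftAdjoint G).map φ) ≫ G.map ((monadicAdjunction G).counit.app Y)
      = G.map ((monadicAdjunction G).counit.app X₀) ≫ φ
    rw [hcounit Y, hcounit X₀, ← G.map_comp, ← Category.assoc]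
    have hnat : (monadicLeftAdjoint G).map φ ≫ κ.inv.app (G.obj Y)
        = κ.inv.app (G.obj X₀) ≫ Sp.map φ := κ.inv.naturality φ
    rw [hnat, Category.assoc, G.map_comp, key, G.map_comp, Category.assoc]
  let Φ : KF.obj X₀ ⟶ KF.obj Y := ⟨φ, hfield⟩
  let r : X₀ ⟶ Y := KF.preimage Φ
  have hGr : G.map r = φ := congrArg Monad.Algebra.Hom.f (KF.map_preimage Φ)
  have hεr : adjp.counit.app X₀ ≫ r = ρ := by
    have h1 : (adjp.homEquiv (G.obj X₀) Y).symm (𝟙 _ ≫ G.map r)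
        = (adjp.homEquiv (G.obj X₀) X₀).symm (𝟙 _) ≫ r :=
      adjp.homEquiv_naturality_right_symm _ _
    rw [Category.id_comp, hGr, hsymmφ, Adjunction.homEquiv_symm_id] at h1
    exact h1.symm
  -- extraction of the underlying morphism
  have hrz : r.hom.left ≫ z' = 𝟙 B₀ := Over.w r.hom
  have heX : (adjp.counit.app X₀).hom.left = gx ≫ p := by
    have h : (adjp.counit.app X₀).hom.left ≫ 𝟙 B₀ = gx ≫ p := Over.w (adjp.counit.app X₀).hom
    exact (Category.comp_id _).symm.trans h
  have hεrl : (adjp.counit.app X₀).hom.left ≫ r.hom.left = gx ≫ ξ := by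
    have := congrArg (fun q => q.hom.left) hεr
    exact this
  -- a section of `gx` coming from the unit
  let A₀o : EOver Γ.E A₀ := ⟨Over.mk (𝟙 A₀), Γ.mem_id A₀⟩
  let jhat : Sp.obj A₀o ⟶ X₀ := ObjectProperty.homMk <| Over.homMk p (by
    show p ≫ (Over.mk (𝟙 B₀)).hom = ((Over.map p).obj (Over.mk (𝟙 A₀))).hom
    simp)
  let j : A₀o ⟶ G.obj X₀ := adjp.homEquiv A₀o X₀ jhat
  have hj : j.hom.left ≫ gx = 𝟙 A₀ := Over.w j.hom
  refine ⟨r.hom.left, hrz, ?_⟩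
  have h2 : (gx ≫ p) ≫ r.hom.left = gx ≫ ξ := by rw [← heX]; exact hεrl
  have h3 : (j.hom.left ≫ gx) ≫ p ≫ r.hom.left = (j.hom.left ≫ gx) ≫ ξ := by
    rw [Category.assoc, ← Category.assoc gx p r.hom.left, h2, Category.assoc]
  rw [hj] at h3
  exact (Category.id_comp _).symm.trans (h3.trans (Category.id_comp _))

/-- The "η-synchronised lifting" map along an extension is itself an extension:
given `e : U ⟶ V` in `E`, the canonical comparison from the kernel pair of `η_U` to
the pullback (along `e`) of the kernel pair of `η_V` is a pullback of the
strongly-Birkhoff comparison of `e`, hence lies in `E`. -/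
lemma sync_mem (hB : Γ.StronglyBirkhoff) {U V : C} (e : U ⟶ V) (he : Γ.E e)
    {KU : C} {d₁ d₂ : KU ⟶ U} (hKU : IsPullback d₁ d₂ (Γ.unitApp U) (Γ.unitApp U))
    {KV : C} {c₁ c₂ : KV ⟶ V} (hKV : IsPullback c₁ c₂ (Γ.unitApp V) (Γ.unitApp V))
    {Te : C} {w₁ : Te ⟶ KV} {w₂ : Te ⟶ U} (hTe : IsPullback w₁ w₂ c₂ e)
    (μ : KU ⟶ Te) (hμ₁ : μ ≫ w₁ ≫ c₁ = d₁ ≫ e) (hμ₂ : μ ≫ w₂ = d₂) :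
    Γ.E μ := by
  obtain ⟨-, -, -, -, Pe, pe₁, pe₂, le, hPe', hle₁', hle₂', hleE⟩ := hB e he
  have hPe : IsPullback pe₁ pe₂ (Γ.unitApp V) (Γ.H.map (Γ.I.map e)) := hPe'
  have hle₁ : le ≫ pe₁ = e := hle₁'
  have hle₂ : le ≫ pe₂ = Γ.unitApp U := hle₂'
  have hχval : (w₁ ≫ c₁) ≫ Γ.unitApp V = (w₂ ≫ Γ.unitApp U) ≫ Γ.H.map (Γ.I.map e) := by
    rw [Category.assoc, hKV.w, ← Category.assoc, hTe.w, Category.assoc, Category.assoc,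
      ← Γ.unit_natural e]
  let χ : Te ⟶ Pe := hPe.lift (w₁ ≫ c₁) (w₂ ≫ Γ.unitApp U) hχval
  have hχ₁ : χ ≫ pe₁ = w₁ ≫ c₁ := hPe.lift_fst _ _ _
  have hχ₂ : χ ≫ pe₂ = w₂ ≫ Γ.unitApp U := hPe.lift_snd _ _ _
  have comm : d₁ ≫ le = μ ≫ χ := by
    apply hPe.hom_ext
    · simp only [Category.assoc]
      rw [hχ₁, hle₁, hμ₁]
    · simp only [Category.assoc]
      rw [hχ₂, hle₂, ← Category.assoc μ w₂, hμ₂]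
      exact hKU.w
  have hpbμ : IsPullback d₁ μ le χ := by
    refine IsPullback.of_isLimit (PullbackCone.IsLimit.mk comm
      (fun sc => hKU.lift sc.fst (sc.snd ≫ w₂) ?_) (fun sc => hKU.lift_fst _ _ _)
      (fun sc => ?_) (fun sc mm hm₁ hm₂ => ?_))
    · have h2 := congrArg (fun q => q ≫ pe₂) sc.condition
      simp only [Category.assoc] at h2
      rw [hle₂, hχ₂] at h2
      rw [Category.assoc]
      exact h2
    · have h2 := congrArg (fun q => q ≫ pe₁) sc.condition
      simp only [Category.assoc] at h2
      rw [hle₁, hχ₁] at h2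
      apply hTe.hom_ext
      · apply hKV.hom_ext
        · simp only [Category.assoc]
          rw [hμ₁, ← Category.assoc _ d₁ e, hKU.lift_fst sc.fst (sc.snd ≫ w₂)]
          exact h2
        · simp only [Category.assoc]
          rw [hTe.w, ← Category.assoc μ w₂ e, hμ₂, ← Category.assoc _ d₂ e,
            hKU.lift_snd sc.fst (sc.snd ≫ w₂), Category.assoc]
      · simp only [Category.assoc]
        rw [hμ₂]
        exact hKU.lift_snd sc.fst (sc.snd ≫ w₂) _
    · apply hKU.hom_ext
      · rw [hKU.lift_fst sc.fst (sc.snd ≫ w₂)]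
        exact hm₁
      · rw [hKU.lift_snd sc.fst (sc.snd ≫ w₂), ← hμ₂, ← Category.assoc, hm₂]
  exact (Γ.hE2 le hleE χ trivial).2 d₁ μ trivial hpbμ

end GaloisStructure

end Aux

/-- If a Galois structure satisfies (E4), (E5), (M) and (B), then
`I : C ⥤ X` preserves every pullback of a morphism `f ∈ E` along a split
epimorphism `g ∈ E`. -/
theorem statement_12 {C : Type u} [Category.{v} C] {X : Type u'} [Category.{v'} X]
    (Γ : GaloisStructure C X)
    (hE4 : CondE4 (fun _ => True) Γ.E) (hE5 : CondE5 Γ.E)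
    (hM : Γ.CondM) (hB : Γ.StronglyBirkhoff) :
    Γ.PreservesSplitPullbacks := by
  intro D' A B C' t h f g hpb hf hg hsplit
  haveI := Γ.hFull; haveI := Γ.hFaithful
  obtain ⟨⟨s, hs⟩⟩ := hsplit.exists_splitEpi
  -- the unit is everywhere an extension
  have hη : ∀ Z : C, Γ.E (Γ.unitApp Z) := Γ.unit_mem hB
  -- the legs of the pullback are extensions
  have ht : Γ.E t := (Γ.hE2 g hg f trivial).2 h t trivial hpb.flip
  have hh : Γ.E h := (Γ.hE2 f hf g trivial).2 t h trivial hpb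
  -- the canonical splitting of `t`
  obtain ⟨u, hut, huh⟩ : ∃ u : A ⟶ D', u ≫ t = 𝟙 A ∧ u ≫ h = f ≫ s :=
    ⟨hpb.lift (𝟙 A) (f ≫ s) (by rw [Category.id_comp, Category.assoc, hs, Category.comp_id]),
      hpb.lift_fst _ _ _, hpb.lift_snd _ _ _⟩
  -- the pullback `Q` of `HI f` along `HI g`
  obtain ⟨Q, qA, qC, -, hQ, hqC⟩ := (Γ.hE2 (Γ.H.map (Γ.I.map f)) (Γ.hG f hf)
    (Γ.H.map (Γ.I.map g)) trivial).1
  have hqA : Γ.E qA := (Γ.hE2 (Γ.H.map (Γ.I.map g)) (Γ.hG g hg)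
    (Γ.H.map (Γ.I.map f)) trivial).2 qC qA trivial hQ.flip
  -- the comparison `c` is an extension, by (E5) applied to the split square `(HIt, HIg)`
  have hHIw : Γ.H.map (Γ.I.map t) ≫ Γ.H.map (Γ.I.map f)
      = Γ.H.map (Γ.I.map h) ≫ Γ.H.map (Γ.I.map g) := by
    rw [← Γ.H.map_comp, ← Γ.H.map_comp, ← Γ.I.map_comp, ← Γ.I.map_comp, hpb.w]
  obtain ⟨c, hcA, hcC, hcE⟩ : ∃ c : Γ.H.obj (Γ.I.obj D') ⟶ Q,
      c ≫ qA = Γ.H.map (Γ.I.map t) ∧ c ≫ qC = Γ.H.map (Γ.I.map h) ∧ Γ.E c := by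
    let σc : Arrow.mk (Γ.H.map (Γ.I.map h)) ⟶ Arrow.mk (Γ.H.map (Γ.I.map f)) :=
      Arrow.homMk (u := Γ.H.map (Γ.I.map t)) (v := Γ.H.map (Γ.I.map g)) hHIw
    let τc : Arrow.mk (Γ.H.map (Γ.I.map f)) ⟶ Arrow.mk (Γ.H.map (Γ.I.map h)) :=
      Arrow.homMk (u := Γ.H.map (Γ.I.map u)) (v := Γ.H.map (Γ.I.map s)) (by
        show Γ.H.map (Γ.I.map u) ≫ Γ.H.map (Γ.I.map h) = Γ.H.map (Γ.I.map f) ≫ Γ.H.map (Γ.I.map s)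
        rw [← Γ.H.map_comp, ← Γ.H.map_comp, ← Γ.I.map_comp, ← Γ.I.map_comp, huh])
    have hτσ : τc ≫ σc = 𝟙 (Arrow.mk (Γ.H.map (Γ.I.map f))) := by
      apply Arrow.hom_ext
      · show Γ.H.map (Γ.I.map u) ≫ Γ.H.map (Γ.I.map t) = 𝟙 _
        rw [← Γ.H.map_comp, ← Γ.I.map_comp, hut, Γ.I.map_id, Γ.H.map_id]
      · show Γ.H.map (Γ.I.map s) ≫ Γ.H.map (Γ.I.map g) = 𝟙 _
        rw [← Γ.H.map_comp, ← Γ.I.map_comp, hs, Γ.I.map_id, Γ.H.map_id]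
    obtain ⟨-, -, -, -, P₅, p₅₁, p₅₂, l₅, hP₅', hl₅₁', hl₅₂', hl₅E⟩ :=
      hE5 σc τc hτσ (Γ.hG h hh) (Γ.hG f hf)
    have hP₅ : IsPullback p₅₁ p₅₂ (Γ.H.map (Γ.I.map g)) (Γ.H.map (Γ.I.map f)) := hP₅'
    have hl₅₁ : l₅ ≫ p₅₁ = Γ.H.map (Γ.I.map h) := hl₅₁'
    have hl₅₂ : l₅ ≫ p₅₂ = Γ.H.map (Γ.I.map t) := hl₅₂'
    obtain ⟨mP, hmP₁, hmP₂⟩ : ∃ mP : P₅ ⟶ Q, mP ≫ qA = p₅₂ ∧ mP ≫ qC = p₅₁ :=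
      ⟨hQ.lift p₅₂ p₅₁ hP₅.w.symm, hQ.lift_fst _ _ _, hQ.lift_snd _ _ _⟩
    obtain ⟨mP', hmP₁', hmP₂'⟩ : ∃ mP' : Q ⟶ P₅, mP' ≫ p₅₁ = qC ∧ mP' ≫ p₅₂ = qA :=
      ⟨hP₅.lift qC qA hQ.w.symm, hP₅.lift_fst _ _ _, hP₅.lift_snd _ _ _⟩
    haveI : IsIso mP := by
      refine ⟨mP', ?_, ?_⟩
      · apply hP₅.hom_ext
        · rw [Category.assoc, hmP₁', hmP₂, Category.id_comp]
        · rw [Category.assoc, hmP₂', hmP₁, Category.id_comp]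
      · apply hQ.hom_ext
        · rw [Category.assoc, hmP₁, hmP₂', Category.id_comp]
        · rw [Category.assoc, hmP₂, hmP₁', Category.id_comp]
    refine ⟨l₅ ≫ mP, ?_, ?_, ?_⟩
    · rw [Category.assoc, hmP₁, hl₅₂]
    · rw [Category.assoc, hmP₂, hl₅₁]
    · exact Γ.hE3 _ _ hl₅E (Γ.mem_iso mP)
  -- the comparison `w : D' ⟶ Q`
  set w : D' ⟶ Q := Γ.unitApp D' ≫ c with hwdef
  have hw : Γ.E w := Γ.hE3 _ _ (hη D') hcE
  have hwA : w ≫ qA = t ≫ Γ.unitApp A := by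
    rw [hwdef, Category.assoc, hcA, ← Γ.unit_natural t]
  have hwC : w ≫ qC = h ≫ Γ.unitApp C' := by
    rw [hwdef, Category.assoc, hcC, ← Γ.unit_natural h]
  -- kernel pairs of units
  obtain ⟨KD, n₁, n₂, -, hKD, -⟩ :=
    (Γ.hE2 (Γ.unitApp D') (hη D') (Γ.unitApp D') trivial).1
  obtain ⟨KA, e₁, e₂, -, hKA, -⟩ :=
    (Γ.hE2 (Γ.unitApp A) (hη A) (Γ.unitApp A) trivial).1
  obtain ⟨KC, a₁, a₂, -, hKC, ha₂⟩ :=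
    (Γ.hE2 (Γ.unitApp C') (hη C') (Γ.unitApp C') trivial).1
  obtain ⟨KB, b₁, b₂, -, hKB, hb₂⟩ :=
    (Γ.hE2 (Γ.unitApp B) (hη B) (Γ.unitApp B) trivial).1
  -- the pullbacks `Th`, `Tf`
  obtain ⟨Th, th₁, th₂, -, hTh, -⟩ := (Γ.hE2 a₂ ha₂ h trivial).1
  obtain ⟨Tf, tf₁, tf₂, -, hTf, -⟩ := (Γ.hE2 b₂ hb₂ f trivial).1
  -- the η-synchronised lifting maps μh, μf, which are extensions
  obtain ⟨μh, hμh₁, hμh₂⟩ : ∃ μ : KD ⟶ Th, μ ≫ th₁ ≫ a₁ = n₁ ≫ h ∧ μ ≫ th₂ = n₂ := by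
    have hval : (n₁ ≫ h) ≫ Γ.unitApp C' = (n₂ ≫ h) ≫ Γ.unitApp C' := by
      simp only [Category.assoc]
      rw [Γ.unit_natural h, reassoc_of% hKD.w]
    refine ⟨hTh.lift (hKC.lift (n₁ ≫ h) (n₂ ≫ h) hval) n₂ (by
      rw [hKC.lift_snd]), ?_, hTh.lift_snd _ _ _⟩
    rw [← Category.assoc, hTh.lift_fst, hKC.lift_fst]
  have hμhE : Γ.E μh := Γ.sync_mem hB h hh hKD hKC hTh μh hμh₁ hμh₂
  obtain ⟨μf, hμf₁, hμf₂⟩ : ∃ μ : KA ⟶ Tf, μ ≫ tf₁ ≫ b₁ = e₁ ≫ f ∧ μ ≫ tf₂ = e₂ := by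
    have hval : (e₁ ≫ f) ≫ Γ.unitApp B = (e₂ ≫ f) ≫ Γ.unitApp B := by
      simp only [Category.assoc]
      rw [Γ.unit_natural f, reassoc_of% hKA.w]
    refine ⟨hTf.lift (hKB.lift (e₁ ≫ f) (e₂ ≫ f) hval) e₂ (by
      rw [hKB.lift_snd]), ?_, hTf.lift_snd _ _ _⟩
    rw [← Category.assoc, hTf.lift_fst, hKB.lift_fst]
  have hμfE : Γ.E μf := Γ.sync_mem hB f hf hKA hKB hTf μf hμf₁ hμf₂
  -- diagonals and the canonical sections `Yf`, `Yh`
  obtain ⟨δB, hδB₁, hδB₂⟩ : ∃ δ : B ⟶ KB, δ ≫ b₁ = 𝟙 B ∧ δ ≫ b₂ = 𝟙 B :=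
    ⟨hKB.lift (𝟙 B) (𝟙 B) rfl, hKB.lift_fst _ _ _, hKB.lift_snd _ _ _⟩
  obtain ⟨δC, hδC₁, hδC₂⟩ : ∃ δ : C' ⟶ KC, δ ≫ a₁ = 𝟙 C' ∧ δ ≫ a₂ = 𝟙 C' :=
    ⟨hKC.lift (𝟙 C') (𝟙 C') rfl, hKC.lift_fst _ _ _, hKC.lift_snd _ _ _⟩
  obtain ⟨Yf, hYf₁, hYf₂⟩ : ∃ Y : A ⟶ Tf, Y ≫ tf₁ = f ≫ δB ∧ Y ≫ tf₂ = 𝟙 A := by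
    refine ⟨hTf.lift (f ≫ δB) (𝟙 A) ?_, hTf.lift_fst _ _ _, hTf.lift_snd _ _ _⟩
    rw [Category.assoc, hδB₂, Category.comp_id, Category.id_comp]
  obtain ⟨Yh, hYh₁, hYh₂⟩ : ∃ Y : D' ⟶ Th, Y ≫ th₁ = h ≫ δC ∧ Y ≫ th₂ = 𝟙 D' := by
    refine ⟨hTh.lift (h ≫ δC) (𝟙 D') ?_, hTh.lift_fst _ _ _, hTh.lift_snd _ _ _⟩
    rw [Category.assoc, hδC₂, Category.comp_id, Category.id_comp]
  -- the relations `KfA` and `Kh'`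
  obtain ⟨KfA, γ₁, γ₂, -, hKfA, hγ₂⟩ := (Γ.hE2 μf hμfE Yf trivial).1
  obtain ⟨Kh', φ₁, φ₂, -, hKh', hφ₂⟩ := (Γ.hE2 μh hμhE Yh trivial).1
  have hγe₂ : γ₁ ≫ e₂ = γ₂ := by
    have h1 := congrArg (fun q => q ≫ tf₂) hKfA.w
    simp only [Category.assoc] at h1
    rw [hμf₂, hYf₂, Category.comp_id] at h1
    exact h1
  have hγf : γ₁ ≫ e₁ ≫ f = γ₂ ≫ f := by
    have h1 := congrArg (fun q => q ≫ (tf₁ ≫ b₁)) hKfA.w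
    simp only [Category.assoc] at h1
    rw [hμf₁, reassoc_of% hYf₁, hδB₁, Category.comp_id] at h1
    exact h1
  have hφe : φ₁ ≫ n₂ = φ₂ := by
    have h1 := congrArg (fun q => q ≫ th₂) hKh'.w
    simp only [Category.assoc] at h1
    rw [hμh₂, hYh₂, Category.comp_id] at h1
    exact h1
  have hφh : φ₁ ≫ n₁ ≫ h = φ₂ ≫ h := by
    have h1 := congrArg (fun q => q ≫ (th₁ ≫ a₁)) hKh'.w
    simp only [Category.assoc] at h1
    rw [hμh₁, reassoc_of% hYh₁, hδC₁, Category.comp_id] at h1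
    exact h1
  -- the joint synchronisation square, an application of (E5)
  obtain ⟨ttK, httK₁, httK₂⟩ : ∃ k : Kh' ⟶ KA,
      k ≫ e₁ = φ₁ ≫ n₁ ≫ t ∧ k ≫ e₂ = φ₁ ≫ n₂ ≫ t := by
    refine ⟨hKA.lift (φ₁ ≫ n₁ ≫ t) (φ₁ ≫ n₂ ≫ t) ?_, hKA.lift_fst _ _ _, hKA.lift_snd _ _ _⟩
    simp only [Category.assoc]
    rw [Γ.unit_natural t, reassoc_of% hKD.w]
  obtain ⟨uuK, huuK₁, huuK₂⟩ : ∃ k : KfA ⟶ KD,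
      k ≫ n₁ = γ₁ ≫ e₁ ≫ u ∧ k ≫ n₂ = γ₁ ≫ e₂ ≫ u := by
    refine ⟨hKD.lift (γ₁ ≫ e₁ ≫ u) (γ₁ ≫ e₂ ≫ u) ?_, hKD.lift_fst _ _ _, hKD.lift_snd _ _ _⟩
    simp only [Category.assoc]
    rw [Γ.unit_natural u, reassoc_of% hKA.w]
  obtain ⟨σl, hσl₁, hσl₂⟩ : ∃ σl : Kh' ⟶ KfA, σl ≫ γ₁ = ttK ∧ σl ≫ γ₂ = φ₂ ≫ t := by
    have hσcond : ttK ≫ μf = (φ₂ ≫ t) ≫ Yf := by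
      apply hTf.hom_ext
      · apply hKB.hom_ext
        · simp only [Category.assoc]
          rw [hμf₁, reassoc_of% httK₁, reassoc_of% hYf₁, hδB₁, Category.comp_id,
            hpb.w, reassoc_of% hφh]
        · simp only [Category.assoc]
          rw [hTf.w, reassoc_of% hμf₂, reassoc_of% httK₂, reassoc_of% hYf₂,
            hpb.w, reassoc_of% hφe]
      · simp only [Category.assoc]
        rw [hμf₂, httK₂, hYf₂, Category.comp_id, reassoc_of% hφe]
    exact ⟨hKfA.lift ttK (φ₂ ≫ t) hσcond, hKfA.lift_fst _ _ _, hKfA.lift_snd _ _ _⟩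
  obtain ⟨τl, hτl₁, hτl₂⟩ : ∃ τl : KfA ⟶ Kh', τl ≫ φ₁ = uuK ∧ τl ≫ φ₂ = γ₂ ≫ u := by
    have hτcond : uuK ≫ μh = (γ₂ ≫ u) ≫ Yh := by
      apply hTh.hom_ext
      · apply hKC.hom_ext
        · simp only [Category.assoc]
          rw [hμh₁, reassoc_of% huuK₁, huh, reassoc_of% hγf,
            reassoc_of% hYh₁, hδC₁, Category.comp_id, huh]
        · simp only [Category.assoc]
          rw [hTh.w, reassoc_of% hμh₂, reassoc_of% huuK₂, huh, reassoc_of% hγe₂,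
            reassoc_of% hYh₂, huh]
      · simp only [Category.assoc]
        rw [hμh₂, huuK₂, hYh₂, Category.comp_id, reassoc_of% hγe₂]
    exact ⟨hKh'.lift uuK (γ₂ ≫ u) hτcond, hKh'.lift_fst _ _ _, hKh'.lift_snd _ _ _⟩
  obtain ⟨PP, pp₁, pp₂, ll, hPP, hll₁, hll₂, hllE⟩ : ∃ (PP : C) (pp₁ : PP ⟶ D')
      (pp₂ : PP ⟶ KfA) (ll : Kh' ⟶ PP), IsPullback pp₁ pp₂ t γ₂ ∧
        ll ≫ pp₁ = φ₂ ∧ ll ≫ pp₂ = σl ∧ Γ.E ll := by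
    let σs : Arrow.mk φ₂ ⟶ Arrow.mk γ₂ := Arrow.homMk (u := σl) (v := t) hσl₂
    let τs : Arrow.mk γ₂ ⟶ Arrow.mk φ₂ := Arrow.homMk (u := τl) (v := u) hτl₂
    have hττ : τs ≫ σs = 𝟙 (Arrow.mk γ₂) := by
      apply Arrow.hom_ext
      · show τl ≫ σl = 𝟙 KfA
        apply hKfA.hom_ext
        · rw [Category.assoc, hσl₁, Category.id_comp]
          apply hKA.hom_ext
          · simp only [Category.assoc]
            rw [httK₁, reassoc_of% hτl₁, reassoc_of% huuK₁, hut, Category.comp_id]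
          · simp only [Category.assoc]
            rw [httK₂, reassoc_of% hτl₁, reassoc_of% huuK₂, hut, Category.comp_id]
        · rw [Category.assoc, hσl₂, Category.id_comp, reassoc_of% hτl₂, hut,
            Category.comp_id]
      · show u ≫ t = 𝟙 A
        exact hut
    obtain ⟨-, -, -, -, PP, pp₁, pp₂, ll, h1, h2, h3, h4⟩ := hE5 σs τs hττ hφ₂ hγ₂
    exact ⟨PP, pp₁, pp₂, ll, h1, h2, h3, h4⟩
  -- the kernel pair of `w`
  obtain ⟨K, k₁, k₂, -, hK, -⟩ := (Γ.hE2 w hw w trivial).1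
  -- THE CHASE: covering the kernel pair of `w`
  obtain ⟨α, hα₁, hα₂⟩ : ∃ α : K ⟶ Th, α ≫ th₁ ≫ a₁ = k₁ ≫ h ∧ α ≫ th₂ = k₂ := by
    have hval : (k₁ ≫ h) ≫ Γ.unitApp C' = (k₂ ≫ h) ≫ Γ.unitApp C' := by
      simp only [Category.assoc]
      rw [← hwC, reassoc_of% hK.w]
    refine ⟨hTh.lift (hKC.lift (k₁ ≫ h) (k₂ ≫ h) hval) k₂ (by rw [hKC.lift_snd]), ?_,
      hTh.lift_snd _ _ _⟩
    rw [← Category.assoc, hTh.lift_fst, hKC.lift_fst]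
  obtain ⟨W₁, w₁, w₂, -, hW₁, hw₂E⟩ := (Γ.hE2 μh hμhE α trivial).1
  have FA : w₁ ≫ n₂ = w₂ ≫ k₂ := by
    have h1 := congrArg (fun q => q ≫ th₂) hW₁.w
    simp only [Category.assoc] at h1
    rw [hμh₂, hα₂] at h1
    exact h1
  have FB : w₁ ≫ n₁ ≫ Γ.unitApp D' = w₂ ≫ k₂ ≫ Γ.unitApp D' := by
    rw [hKD.w, ← Category.assoc, FA, Category.assoc]
  have FC : w₁ ≫ n₁ ≫ h = w₂ ≫ k₁ ≫ h := by
    have h1 := congrArg (fun q => q ≫ (th₁ ≫ a₁)) hW₁.w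
    simp only [Category.assoc] at h1
    rw [hμh₁, hα₁] at h1
    exact h1
  obtain ⟨inner1, hinner1₁, hinner1₂⟩ : ∃ i1 : W₁ ⟶ KA,
      i1 ≫ e₁ = w₂ ≫ k₁ ≫ t ∧ i1 ≫ e₂ = w₁ ≫ n₁ ≫ t := by
    have e₁A : w₂ ≫ k₁ ≫ t ≫ Γ.unitApp A = w₂ ≫ k₂ ≫ t ≫ Γ.unitApp A := by
      rw [← hwA, reassoc_of% hK.w]
    have e₂A : w₁ ≫ n₁ ≫ t ≫ Γ.unitApp A = w₂ ≫ k₂ ≫ t ≫ Γ.unitApp A := by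
      rw [Γ.unit_natural t, reassoc_of% hKD.w, ← Category.assoc w₁ n₂, FA,
        Category.assoc, ← Γ.unit_natural t]
    refine ⟨hKA.lift (w₂ ≫ k₁ ≫ t) (w₁ ≫ n₁ ≫ t) ?_, hKA.lift_fst _ _ _,
      hKA.lift_snd _ _ _⟩
    simp only [Category.assoc]
    rw [e₁A, e₂A]
  obtain ⟨inner2, hinner2₁, hinner2γ⟩ : ∃ i2 : W₁ ⟶ KfA,
      i2 ≫ γ₁ = inner1 ∧ i2 ≫ γ₂ = w₁ ≫ n₁ ≫ t := by
    have hvalB : inner1 ≫ μf = (w₁ ≫ n₁ ≫ t) ≫ Yf := by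
      apply hTf.hom_ext
      · apply hKB.hom_ext
        · simp only [Category.assoc]
          rw [hμf₁, reassoc_of% hinner1₁, reassoc_of% hYf₁, hδB₁, Category.comp_id,
            hpb.w, reassoc_of% FC]
        · simp only [Category.assoc]
          rw [hTf.w, reassoc_of% hμf₂, reassoc_of% hinner1₂, reassoc_of% hYf₂]
      · simp only [Category.assoc]
        rw [hμf₂, hinner1₂, hYf₂, Category.comp_id]
    exact ⟨hKfA.lift inner1 (w₁ ≫ n₁ ≫ t) hvalB, hKfA.lift_fst _ _ _, hKfA.lift_snd _ _ _⟩
  obtain ⟨β, hβ₁, hβ₂⟩ : ∃ β : W₁ ⟶ PP, β ≫ pp₁ = w₁ ≫ n₁ ∧ β ≫ pp₂ = inner2 := by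
    refine ⟨hPP.lift (w₁ ≫ n₁) inner2 ?_, hPP.lift_fst _ _ _, hPP.lift_snd _ _ _⟩
    rw [Category.assoc, hinner2γ]
  obtain ⟨W₂, v₁, v₂, -, hW₂, hv₂E⟩ := (Γ.hE2 ll hllE β trivial).1
  have G1 : v₁ ≫ φ₂ = v₂ ≫ w₁ ≫ n₁ := by
    have h1 := congrArg (fun q => q ≫ pp₁) hW₂.w
    simp only [Category.assoc] at h1
    rw [hll₁, hβ₁] at h1
    exact h1
  have G2 : v₁ ≫ σl = v₂ ≫ inner2 := by
    have h1 := congrArg (fun q => q ≫ pp₂) hW₂.w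
    simp only [Category.assoc] at h1
    rw [hll₂, hβ₂] at h1
    exact h1
  have G3 : v₁ ≫ φ₁ ≫ n₁ ≫ Γ.unitApp D' = v₂ ≫ w₁ ≫ n₁ ≫ Γ.unitApp D' := by
    rw [hKD.w, reassoc_of% hφe, ← Category.assoc, G1]
    simp only [Category.assoc]
    rw [← hKD.w]
  have G4 : v₁ ≫ φ₁ ≫ n₁ ≫ h = v₂ ≫ w₂ ≫ k₁ ≫ h := by
    rw [hφh, ← Category.assoc, G1]
    simp only [Category.assoc]
    rw [FC]
  have G5 : v₁ ≫ φ₁ ≫ n₁ ≫ t = v₂ ≫ w₂ ≫ k₁ ≫ t := by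
    have h1 := congrArg (fun q => q ≫ (γ₁ ≫ e₁)) G2
    simp only [Category.assoc] at h1
    rw [reassoc_of% hσl₁, httK₁, reassoc_of% hinner2₁, hinner1₁] at h1
    exact h1
  have hx : v₁ ≫ φ₁ ≫ n₁ = v₂ ≫ w₂ ≫ k₁ := by
    apply hpb.hom_ext
    · simpa only [Category.assoc] using G5
    · simpa only [Category.assoc] using G4
  have hfinal : ((v₂ ≫ w₂) ≫ k₁) ≫ Γ.unitApp D' = ((v₂ ≫ w₂) ≫ k₂) ≫ Γ.unitApp D' := by
    have h1 := congrArg (fun q => q ≫ Γ.unitApp D') hx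
    simp only [Category.assoc] at h1
    simp only [Category.assoc]
    rw [← h1, G3, FB]
  -- the canonical map `ι` from the kernel pair of the unit to the kernel pair of `w`
  obtain ⟨ι, hι₁, hι₂⟩ : ∃ ι : KD ⟶ K, ι ≫ k₁ = n₁ ∧ ι ≫ k₂ = n₂ := by
    refine ⟨hK.lift n₁ n₂ ?_, hK.lift_fst _ _ _, hK.lift_snd _ _ _⟩
    rw [hwdef, ← Category.assoc, ← Category.assoc, hKD.w]
  have hζι : hKD.lift ((v₂ ≫ w₂) ≫ k₁) ((v₂ ≫ w₂) ≫ k₂) hfinal ≫ ι = v₂ ≫ w₂ := by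
    apply hK.hom_ext
    · rw [Category.assoc, hι₁, hKD.lift_fst]
    · rw [Category.assoc, hι₂, hKD.lift_snd]
  have hιE : Γ.E ι := hE4 _ ι trivial trivial trivial
    (by rw [hζι]; exact Γ.hE3 _ _ hv₂E hw₂E)
  have hιmono : Mono ι := by
    constructor
    intro T a b hab
    apply hKD.hom_ext
    · have h1 := congrArg (fun q => q ≫ k₁) hab
      simp only [Category.assoc, hι₁] at h1
      exact h1
    · have h1 := congrArg (fun q => q ≫ k₂) hab
      simp only [Category.assoc, hι₂] at h1
      exact h1
  have hιiso : IsIso ι := Γ.isIso_of_mono_of_mem hM ι hιE hιmono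
  have hcoceq : k₁ ≫ Γ.unitApp D' = k₂ ≫ Γ.unitApp D' := by
    haveI := hιiso
    have e1 : k₁ = inv ι ≫ n₁ := by
      rw [← hι₁, ← Category.assoc, IsIso.inv_hom_id, Category.id_comp]
    have e2 : k₂ = inv ι ≫ n₂ := by
      rw [← hι₂, ← Category.assoc, IsIso.inv_hom_id, Category.id_comp]
    rw [e1, e2, Category.assoc, Category.assoc, hKD.w]
  -- glue: `c` is a split epimorphism compatibly with the units
  obtain ⟨r, hr₁, hr₂⟩ := Γ.descent_glue w (hM w hw) c hcE (Γ.unitApp D') hwdef.symm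
    k₁ k₂ hK hcoceq
  have hcr : c ≫ r = 𝟙 (Γ.H.obj (Γ.I.obj D')) := by
    apply Γ.unit_cancel
    rw [← Category.assoc, ← hwdef, hr₂, Category.comp_id]
  haveI : IsIso c := ⟨r, hcr, hr₁⟩
  -- the reflected square is a pullback
  have hbig : IsPullback (Γ.H.map (Γ.I.map t)) (Γ.H.map (Γ.I.map h))
      (Γ.H.map (Γ.I.map f)) (Γ.H.map (Γ.I.map g)) := by
    refine IsPullback.of_isLimit (PullbackCone.IsLimit.mk hHIw
      (fun sc => hQ.lift sc.fst sc.snd sc.condition ≫ inv c) (fun sc => ?_) (fun sc => ?_)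
      (fun sc mm hm₁ hm₂ => ?_))
    · rw [← hcA, Category.assoc, IsIso.inv_hom_id_assoc, hQ.lift_fst]
    · rw [← hcC, Category.assoc, IsIso.inv_hom_id_assoc, hQ.lift_snd]
    · have hmc : mm ≫ c = hQ.lift sc.fst sc.snd sc.condition := by
        apply hQ.hom_ext
        · rw [Category.assoc, hcA, hQ.lift_fst]
          exact hm₁
        · rw [Category.assoc, hcC, hQ.lift_snd]
          exact hm₂
      have hgoal : mm = hQ.lift sc.fst sc.snd sc.condition ≫ inv c := by
        rw [← hmc, Category.assoc, IsIso.hom_inv_id, Category.comp_id]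
      exact hgoal
  haveI : ReflectsLimitsOfSize.{0, 0} Γ.H := Limits.fullyFaithful_reflectsLimits Γ.H
  exact IsPullback.of_map Γ.H
    (by rw [← Γ.I.map_comp, ← Γ.I.map_comp, hpb.w]) hbig

end GaloisPaper
end

section
/- Let C be a category with finite limits and E a class of morphisms satisfying (E1)-(E5): contains isomorphisms, pullback-stable, closed under composition, right-cancellable (g∘f ∈ E implies g ∈ E), and every split epimorphism of Ext(C) lies in E¹. Then E¹, as a class of morphisms of Ext(C), satisfies (E1)-(E5) as well (with (E¹)¹ in place of E¹). -/
open CategoryTheory CategoryTheory.Limits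

universe v u v' u'

namespace GaloisPaper

variable {C : Type u} [Category.{v} C]

section Statement13Aux

variable {C : Type u} [Category.{v} C]

/-- If two pullbacks of the same cospan receive compatible comparison maps, membership in `E`
transfers from one comparison to the other. -/
theorem comp_indep {E : MorphismProperty C}
    (hE1 : CondE1 (fun _ : C => True) E) (hE3 : CondE3 E)
    {W X Y Z P P' : C} {p₁ : P ⟶ X} {p₂ : P ⟶ Y} {f : X ⟶ Z} {g : Y ⟶ Z}
    {p₁' : P' ⟶ X} {p₂' : P' ⟶ Y}
    (h : IsPullback p₁ p₂ f g) (h' : IsPullback p₁' p₂' f g)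
    {l : W ⟶ P} {l' : W ⟶ P'}
    (e₁ : l ≫ p₁ = l' ≫ p₁') (e₂ : l ≫ p₂ = l' ≫ p₂') (hl : E l) : E l' := by
  have hiso : E (h.isoIsPullback _ _ h').hom := hE1 _ trivial trivial inferInstance
  have heq : l' = l ≫ (h.isoIsPullback _ _ h').hom := by
    apply h'.hom_ext
    · rw [Category.assoc, IsPullback.isoIsPullback_hom_fst, e₁]
    · rw [Category.assoc, IsPullback.isoIsPullback_hom_snd, e₂]
  rw [heq]
  exact hE3 _ _ hl hiso

section PBsec

variable [HasFiniteLimits C]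

variable {a b c : Arrow C} (σ : a ⟶ b) (g : c ⟶ b)

theorem pbHom_w :
    (pullback.fst σ.left g.left ≫ a.hom) ≫ σ.right =
      (pullback.snd σ.left g.left ≫ c.hom) ≫ g.right := by
  rw [Category.assoc, Category.assoc, ← Arrow.w σ, ← Arrow.w g, ← Category.assoc,
    ← Category.assoc, pullback.condition]

/-- The induced morphism between componentwise pullbacks. -/
noncomputable def pbHom : pullback σ.left g.left ⟶ pullback σ.right g.right :=
  pullback.lift (pullback.fst σ.left g.left ≫ a.hom) (pullback.snd σ.left g.left ≫ c.hom)
    (pbHom_w σ g)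

theorem pbHom_fst : pbHom σ g ≫ pullback.fst σ.right g.right =
    pullback.fst σ.left g.left ≫ a.hom := pullback.lift_fst _ _ _

theorem pbHom_snd : pbHom σ g ≫ pullback.snd σ.right g.right =
    pullback.snd σ.left g.left ≫ c.hom := pullback.lift_snd _ _ _

/-- The componentwise pullback in the arrow category. -/
noncomputable def pbObj : Arrow C := Arrow.mk (pbHom σ g)

/-- First projection of the componentwise pullback. -/
noncomputable def pbQ₁ : pbObj σ g ⟶ a :=
  Arrow.homMk (u := pullback.fst σ.left g.left) (v := pullback.fst σ.right g.right)
    (by exact (pullback.lift_fst _ _ _).symm)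

/-- Second projection of the componentwise pullback. -/
noncomputable def pbQ₂ : pbObj σ g ⟶ c :=
  Arrow.homMk (u := pullback.snd σ.left g.left) (v := pullback.snd σ.right g.right)
    (by exact (pullback.lift_snd _ _ _).symm)

theorem pb_isPullback : IsPullback (pbQ₁ σ g) (pbQ₂ σ g) σ g := by
  have comm : pbQ₁ σ g ≫ σ = pbQ₂ σ g ≫ g := by
    apply Arrow.hom_ext <;> exact pullback.condition
  apply IsPullback.of_isLimit' ⟨comm⟩
  refine PullbackCone.IsLimit.mk _ (fun s => ?_) (fun s => ?_) (fun s => ?_) (fun s m hm₁ hm₂ => ?_)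
  · -- the lift
    have hsl : s.fst.left ≫ σ.left = s.snd.left ≫ g.left := by
      have := congrArg CommaMorphism.left s.condition
      simpa using this
    have hsr : s.fst.right ≫ σ.right = s.snd.right ≫ g.right := by
      have := congrArg CommaMorphism.right s.condition
      simpa using this
    exact Arrow.homMk (u := pullback.lift s.fst.left s.snd.left hsl)
      (v := pullback.lift s.fst.right s.snd.right hsr)
      (by
        apply pullback.hom_ext
        · simp only [pbObj, pbHom, Arrow.mk_hom, Category.assoc, pullback.lift_fst,
            pullback.lift_fst_assoc]
          exact Arrow.w s.fst
        · simp only [pbObj, pbHom, Arrow.mk_hom, Category.assoc, pullback.lift_snd,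
            pullback.lift_snd_assoc]
          exact Arrow.w s.snd)
  · apply Arrow.hom_ext <;> exact pullback.lift_fst _ _ _
  · apply Arrow.hom_ext <;> exact pullback.lift_snd _ _ _
  · apply Arrow.hom_ext
    · apply pullback.hom_ext
      · exact (congrArg CommaMorphism.left hm₁).trans (pullback.lift_fst _ _ _).symm
      · exact (congrArg CommaMorphism.left hm₂).trans (pullback.lift_snd _ _ _).symm
    · apply pullback.hom_ext
      · exact (congrArg CommaMorphism.right hm₁).trans (pullback.lift_fst _ _ _).symm
      · exact (congrArg CommaMorphism.right hm₂).trans (pullback.lift_snd _ _ _).symm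

theorem pb_spec {E : MorphismProperty C}
    (hE1 : CondE1 (fun _ : C => True) E) (hE2 : CondE2 (fun _ : C => True) E) (hE3 : CondE3 E)
    (hσ : InE1 E σ) (hc : E c.hom) :
    E (pbObj σ g).hom ∧ InE1 E (pbQ₂ σ g) := by
  obtain ⟨hEa, hEb, hsl, hsr, P, p₁, p₂, l, hP, hl1, hl2, hl⟩ := hσ
  have hR : IsPullback (pullback.fst σ.right g.right) (pullback.snd σ.right g.right)
      σ.right g.right := IsPullback.of_hasPullback _ _
  have hL : IsPullback (pullback.fst σ.left g.left) (pullback.snd σ.left g.left)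
      σ.left g.left := IsPullback.of_hasPullback _ _
  have hQ : IsPullback (pullback.fst (pullback.snd σ.right g.right) c.hom)
      (pullback.snd (pullback.snd σ.right g.right) c.hom)
      (pullback.snd σ.right g.right) c.hom := IsPullback.of_hasPullback _ _
  have hmw : (pullback.fst (pullback.snd σ.right g.right) c.hom ≫ pullback.fst σ.right g.right)
      ≫ σ.right =
      (pullback.snd (pullback.snd σ.right g.right) c.hom ≫ g.left) ≫ b.hom := by
    rw [Category.assoc, Category.assoc, pullback.condition, Arrow.w g, ← Category.assoc,
      ← Category.assoc, pullback.condition]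
  have big : IsPullback
      (pullback.fst (pullback.snd σ.right g.right) c.hom ≫ pullback.fst σ.right g.right)
      (pullback.snd (pullback.snd σ.right g.right) c.hom) σ.right (g.left ≫ b.hom) := by
    have h := hQ.paste_horiz hR
    rwa [← Arrow.w g] at h
  have hs : IsPullback (hP.lift _ _ hmw ≫ p₁)
      (pullback.snd (pullback.snd σ.right g.right) c.hom) σ.right (g.left ≫ b.hom) := by
    rw [IsPullback.lift_fst]; exact big
  have hm : IsPullback (hP.lift _ _ hmw)
      (pullback.snd (pullback.snd σ.right g.right) c.hom) p₂ g.left :=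
    hs.of_right (IsPullback.lift_snd _ _ _ _) hP
  have hsk : pullback.fst σ.left g.left ≫ l =
      pullback.lift (pbHom σ g) (pullback.snd σ.left g.left) (pbHom_snd σ g) ≫
        hP.lift _ _ hmw := by
    apply hP.hom_ext
    · simp only [Category.assoc]
      rw [hl1, IsPullback.lift_fst, ← Category.assoc, pullback.lift_fst, pbHom_fst]
    · simp only [Category.assoc]
      rw [hl2, IsPullback.lift_snd, ← Category.assoc, pullback.lift_snd,
        ← pullback.condition]
  have hbigL : IsPullback (pullback.fst σ.left g.left)
      (pullback.lift (pbHom σ g) (pullback.snd σ.left g.left) (pbHom_snd σ g) ≫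
        pullback.snd (pullback.snd σ.right g.right) c.hom)
      (l ≫ p₂) g.left := by
    rw [pullback.lift_snd, hl2]; exact hL
  have hk : IsPullback (pullback.fst σ.left g.left)
      (pullback.lift (pbHom σ g) (pullback.snd σ.left g.left) (pbHom_snd σ g))
      l (hP.lift _ _ hmw) := hbigL.of_bot hsk hm
  have hEk : E (pullback.lift (pbHom σ g) (pullback.snd σ.left g.left) (pbHom_snd σ g)) :=
    (hE2 l hl (hP.lift _ _ hmw) trivial).2 _ _ trivial hk
  have hEt₁ : E (pullback.fst (pullback.snd σ.right g.right) c.hom) :=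
    (hE2 c.hom hc (pullback.snd σ.right g.right) trivial).2 _ _ trivial hQ.flip
  have hEhom : E (pbHom σ g) := by
    have heq : pbHom σ g =
        pullback.lift (pbHom σ g) (pullback.snd σ.left g.left) (pbHom_snd σ g) ≫
          pullback.fst (pullback.snd σ.right g.right) c.hom := (pullback.lift_fst _ _ _).symm
    rw [heq]; exact hE3 _ _ hEk hEt₁
  have hEs₂ : E (pullback.snd σ.left g.left) :=
    (hE2 σ.left hsl g.left trivial).2 _ _ trivial hL
  have hEr₂ : E (pullback.snd σ.right g.right) :=
    (hE2 σ.right hsr g.right trivial).2 _ _ trivial hR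
  exact ⟨hEhom, hEhom, hc, hEs₂, hEr₂,
    pullback (pullback.snd σ.right g.right) c.hom, pullback.fst _ _, pullback.snd _ _,
    pullback.lift (pbHom σ g) (pullback.snd σ.left g.left) (pbHom_snd σ g), hQ,
    pullback.lift_fst _ _ _, pullback.lift_snd _ _ _, hEk⟩

end PBsec

variable [HasFiniteLimits C]

/-- `InE1` is stable under precomposition with isomorphisms (towards an `E`-arrow). -/
theorem inE1_iso_comp {E : MorphismProperty C}
    (hE1 : CondE1 (fun _ : C => True) E) (hE3 : CondE3 E)
    {a' a b : Arrow C} (φ : a' ⟶ a) [IsIso φ] {σ : a ⟶ b}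
    (hσ : InE1 E σ) (ha' : E a'.hom) : InE1 E (φ ≫ σ) := by
  obtain ⟨hEa, hEb, hsl, hsr, P, p₁, p₂, l, hP, hl1, hl2, hl⟩ := hσ
  have hil : E φ.left := hE1 _ trivial trivial inferInstance
  have hir : E (inv φ.right) := hE1 _ trivial trivial inferInstance
  refine ⟨ha', hEb, hE3 _ _ hil hsl, hE3 _ _ (hE1 φ.right trivial trivial inferInstance) hsr,
    P, p₁ ≫ inv φ.right, p₂, φ.left ≫ l, ?_, ?_, ?_, hE3 _ _ hil hl⟩
  · refine hP.of_iso (Iso.refl P) (asIso φ.right).symm (Iso.refl _) (Iso.refl _) ?_ ?_ ?_ ?_ <;>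
      simp [Comma.comp_right]
  · rw [Category.assoc, ← Category.assoc l, hl1, ← Category.assoc, Arrow.w φ,
      Category.assoc, IsIso.hom_inv_id, Category.comp_id]
  · rw [Category.assoc, hl2]; rfl

variable (E : MorphismProperty C)

theorem condE3' (hE2 : CondE2 (fun _ : C => True) E) (hE3 : CondE3 E) : CondE3 (InE1 E) := by
  intro a b c σ τ hσ hτ
  obtain ⟨hEa, hEb, hσl, hσr, Pσ, pσ₁, pσ₂, lσ, hPσ, hσ1, hσ2, hlσ⟩ := hσ
  obtain ⟨_, hEc, hτl, hτr, Pτ, pτ₁, pτ₂, lτ, hPτ, hτ1, hτ2, hlτ⟩ := hτ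
  refine ⟨hEa, hEc, hE3 _ _ hσl hτl, hE3 _ _ hσr hτr, ?_⟩
  have hPm : IsPullback (pullback.fst σ.right pτ₁) (pullback.snd σ.right pτ₁) σ.right pτ₁ :=
    IsPullback.of_hasPullback _ _
  have big : IsPullback (pullback.fst σ.right pτ₁) (pullback.snd σ.right pτ₁ ≫ pτ₂)
      (σ.right ≫ τ.right) c.hom := hPm.paste_vert hPτ
  have hntw : (pσ₂ ≫ b.hom) ≫ τ.right = (pσ₂ ≫ τ.left) ≫ c.hom := by
    rw [Category.assoc, Category.assoc, Arrow.w τ]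
  set nt : Pσ ⟶ Pτ := hPτ.lift (pσ₂ ≫ b.hom) (pσ₂ ≫ τ.left) hntw with hnt_def
  have hnw : pσ₁ ≫ σ.right = nt ≫ pτ₁ := by rw [IsPullback.lift_fst]; exact hPσ.w
  set n : Pσ ⟶ pullback σ.right pτ₁ := pullback.lift pσ₁ nt hnw with hn_def
  have hPσ' : IsPullback (n ≫ pullback.fst σ.right pτ₁) pσ₂ σ.right (lτ ≫ pτ₁) := by
    rw [pullback.lift_fst, hτ1]; exact hPσ
  have hp : n ≫ pullback.snd σ.right pτ₁ = pσ₂ ≫ lτ := by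
    rw [pullback.lift_snd]
    apply hPτ.hom_ext
    · rw [IsPullback.lift_fst, Category.assoc, hτ1]
    · rw [IsPullback.lift_snd, Category.assoc, hτ2]
  have hn : IsPullback n pσ₂ (pullback.snd σ.right pτ₁) lτ := hPσ'.of_right hp hPm
  have hEn : E n := (hE2 lτ hlτ _ trivial).2 pσ₂ n trivial hn.flip
  refine ⟨pullback σ.right pτ₁, pullback.fst σ.right pτ₁, pullback.snd σ.right pτ₁ ≫ pτ₂,
    lσ ≫ n, big, ?_, ?_, hE3 _ _ hlσ hEn⟩
  · rw [Category.assoc, pullback.lift_fst, hσ1]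
  · have hns : n ≫ pullback.snd σ.right pτ₁ ≫ pτ₂ = pσ₂ ≫ τ.left := by
      rw [← Category.assoc, pullback.lift_snd, IsPullback.lift_snd]
    simp only [Category.assoc]
    rw [hns, ← Category.assoc, hσ2]
    rfl

theorem cancel_left (hE2 : CondE2 (fun _ : C => True) E) (hE3 : CondE3 E)
    (hE4 : CondE4 (fun _ : C => True) E)
    {a b c : Arrow C} (σ : a ⟶ b) (τ : b ⟶ c)
    (hσ : InE1 E σ) (hστ : InE1 E (σ ≫ τ)) : InE1 E τ := by
  obtain ⟨hEa, hEb, hσl, hσr, _⟩ := hσ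
  obtain ⟨_, hEc, hstl, hstr, P, p₁, p₂, l, hP, h1, h2, hl⟩ := hστ
  have hτl : E τ.left := hE4 σ.left τ.left trivial trivial trivial hstl
  have hτr : E τ.right := hE4 σ.right τ.right trivial trivial trivial hstr
  have hlτw : b.hom ≫ τ.right = τ.left ≫ c.hom := (Arrow.w τ).symm
  set lτ : b.left ⟶ pullback τ.right c.hom := pullback.lift b.hom τ.left hlτw with hlτ_def
  have hP' : IsPullback p₁ p₂ (σ.right ≫ τ.right) c.hom := hP
  have hnww : (p₁ ≫ σ.right) ≫ τ.right = p₂ ≫ c.hom := by rw [Category.assoc]; exact hP'.w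
  set n : P ⟶ pullback τ.right c.hom := pullback.lift (p₁ ≫ σ.right) p₂ hnww with hn_def
  have hs : IsPullback p₁ (n ≫ pullback.snd τ.right c.hom) (σ.right ≫ τ.right) c.hom := by
    rw [pullback.lift_snd]; exact hP'
  have hn : IsPullback p₁ n σ.right (pullback.fst τ.right c.hom) :=
    hs.of_bot (pullback.lift_fst _ _ _).symm (IsPullback.of_hasPullback τ.right c.hom)
  have hEn : E n := (hE2 σ.right hσr _ trivial).2 p₁ n trivial hn
  have hcomp : l ≫ n = σ.left ≫ lτ := by
    apply pullback.hom_ext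
    · rw [Category.assoc, pullback.lift_fst, ← Category.assoc, h1, Category.assoc,
        pullback.lift_fst, Arrow.w σ]
    · rw [Category.assoc, pullback.lift_snd, h2, Category.assoc, pullback.lift_snd]; rfl
  have hElτ : E lτ := hE4 σ.left lτ trivial trivial trivial
    (by rw [← hcomp]; exact hE3 _ _ hl hEn)
  exact ⟨hEb, hEc, hτl, hτr, pullback τ.right c.hom, pullback.fst _ _, pullback.snd _ _, lτ,
    IsPullback.of_hasPullback _ _, pullback.lift_fst _ _ _, pullback.lift_snd _ _ _, hElτ⟩

theorem condE2' (hE1 : CondE1 (fun _ : C => True) E) (hE2 : CondE2 (fun _ : C => True) E)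
    (hE3 : CondE3 E) : CondE2 (fun x : Arrow C => E x.hom) (InE1 E) := by
  intro a b σ hσ c g hc
  have hspec := pb_spec σ g hE1 hE2 hE3 hσ hc
  constructor
  · exact ⟨pbObj σ g, pbQ₁ σ g, pbQ₂ σ g, hspec.1, pb_isPullback σ g, hspec.2⟩
  · intro d q₁ q₂ hd hpb
    rw [← IsPullback.isoIsPullback_hom_snd a c hpb (pb_isPullback σ g)]
    exact inE1_iso_comp hE1 hE3 _ hspec.2 hd

theorem condE4' (hE1 : CondE1 (fun _ : C => True) E) (hE2 : CondE2 (fun _ : C => True) E)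
    (hE3 : CondE3 E) (hE4 : CondE4 (fun _ : C => True) E) (hE5 : CondE5 E) :
    CondE4 (fun x : Arrow C => E x.hom) (InE1 E) := by
  intro a b c σ τ ha hb hc hστ
  have hspec := pb_spec (σ ≫ τ) τ hE1 hE2 hE3 hστ hb
  have hpb := pb_isPullback (σ ≫ τ) τ
  have hsw : 𝟙 a ≫ (σ ≫ τ) = σ ≫ τ := Category.id_comp _
  have hq₁ : InE1 E (pbQ₁ (σ ≫ τ) τ) :=
    hE5 (pbQ₁ (σ ≫ τ) τ) (hpb.lift (𝟙 a) σ hsw) (hpb.lift_fst _ _ _) hspec.1 ha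
  have h3 : InE1 E (pbQ₁ (σ ≫ τ) τ ≫ (σ ≫ τ)) := condE3' E hE2 hE3 _ _ hq₁ hστ
  refine cancel_left E hE2 hE3 hE4 (pbQ₂ (σ ≫ τ) τ) τ hspec.2 ?_
  rw [← hpb.w]
  exact h3

theorem condE5' (hE1 : CondE1 (fun _ : C => True) E) (hE2 : CondE2 (fun _ : C => True) E)
    (hE3 : CondE3 E) (hE5 : CondE5 E) : CondE5 (InE1 E) := by
  intro a b σ τ hτσ ha hb
  have ha' := ha
  have hb' := hb
  -- component identities of the section
  have hll : τ.left ≫ σ.left = 𝟙 b.left := by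
    have := congrArg CommaMorphism.left hτσ; simpa using this
  have hrr : τ.right ≫ σ.right = 𝟙 b.right := by
    have := congrArg CommaMorphism.right hτσ; simpa using this
  have hσl : InE1 E σ.left := hE5 σ.left τ.left hll ha.1 hb.1
  have hσr : InE1 E σ.right := hE5 σ.right τ.right hrr ha.2.1 hb.2.1
  -- cube faces
  have face_l : σ.left.left ≫ b.hom.left = a.hom.left ≫ σ.right.left := by
    have h := congrArg CommaMorphism.left (Arrow.w σ)
    simpa only [Arrow.comp_left] using h
  have face_r : σ.left.right ≫ b.hom.right = a.hom.right ≫ σ.right.right := by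
    have h := congrArg CommaMorphism.right (Arrow.w σ)
    simpa only [Arrow.comp_right] using h
  have tface_l : τ.left.left ≫ a.hom.left = b.hom.left ≫ τ.right.left := by
    have h := congrArg CommaMorphism.left (Arrow.w τ)
    simpa only [Arrow.comp_left] using h
  have tface_r : τ.left.right ≫ a.hom.right = b.hom.right ≫ τ.right.right := by
    have h := congrArg CommaMorphism.right (Arrow.w τ)
    simpa only [Arrow.comp_right] using h
  have hll_l : τ.left.left ≫ σ.left.left = 𝟙 b.left.left := by
    have := congrArg CommaMorphism.left hll; simpa using this
  have hll_r : τ.left.right ≫ σ.left.right = 𝟙 b.left.right := by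
    have := congrArg CommaMorphism.right hll; simpa using this
  have hrr_l : τ.right.left ≫ σ.right.left = 𝟙 b.right.left := by
    have := congrArg CommaMorphism.left hrr; simpa using this
  have hrr_r : τ.right.right ≫ σ.right.right = 𝟙 b.right.right := by
    have := congrArg CommaMorphism.right hrr; simpa using this
  -- abbreviations for the componentwise pullback of σ.right along b.hom
  set fstL := pullback.fst σ.right.left b.hom.left with hfstL_def
  set sndL := pullback.snd σ.right.left b.hom.left with hsndL_def
  set fstR := pullback.fst σ.right.right b.hom.right with hfstR_def
  set sndR := pullback.snd σ.right.right b.hom.right with hsndR_def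
  have condL : fstL ≫ σ.right.left = sndL ≫ b.hom.left := pullback.condition
  have pbh_f : pbHom σ.right b.hom ≫ fstR = fstL ≫ a.right.hom := pullback.lift_fst _ _ _
  have pbh_s : pbHom σ.right b.hom ≫ sndR = sndL ≫ b.left.hom := pullback.lift_snd _ _ _
  -- the comparison morphism lam : a.left ⟶ pbObj σ.right b.hom
  have w1 : a.hom.left ≫ σ.right.left = σ.left.left ≫ b.hom.left := face_l.symm
  have w2 : a.hom.right ≫ σ.right.right = σ.left.right ≫ b.hom.right := face_r.symm
  set lamL : a.left.left ⟶ pullback σ.right.left b.hom.left :=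
    pullback.lift a.hom.left σ.left.left w1 with hlamL_def
  set lamR : a.left.right ⟶ pullback σ.right.right b.hom.right :=
    pullback.lift a.hom.right σ.left.right w2 with hlamR_def
  have lamL_f : lamL ≫ fstL = a.hom.left := pullback.lift_fst _ _ _
  have lamL_s : lamL ≫ sndL = σ.left.left := pullback.lift_snd _ _ _
  have lamR_f : lamR ≫ fstR = a.hom.right := pullback.lift_fst _ _ _
  have lamR_s : lamR ≫ sndR = σ.left.right := pullback.lift_snd _ _ _
  have wlam : lamL ≫ pbHom σ.right b.hom = a.left.hom ≫ lamR := by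
    apply pullback.hom_ext
    · rw [Category.assoc, pbh_f, ← Category.assoc, lamL_f, Category.assoc, lamR_f]
      exact Arrow.w a.hom
    · rw [Category.assoc, pbh_s, ← Category.assoc, lamL_s, Category.assoc, lamR_s]
      exact Arrow.w σ.left
  set lam : a.left ⟶ pbObj σ.right b.hom := Arrow.homMk (u := lamL) (v := lamR)
    (by exact wlam) with hlam_def
  -- E-membership of lamL via (E5) applied to the left face
  have hEll : E lamL := by
    have hsec : Arrow.homMk' _ _ tface_l ≫ Arrow.homMk' _ _ face_l = 𝟙 (Arrow.mk b.hom.left) := by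
      apply Arrow.hom_ext
      · simpa using hll_l
      · simpa using hrr_l
    obtain ⟨_, _, _, _, P₀, π₁, π₂, l₀, hP₀, e1, e2, hEl₀⟩ :=
      hE5 (Arrow.homMk' _ _ face_l) (Arrow.homMk' _ _ tface_l) hsec ha.2.2.1 hb.2.2.1
    simp only [Arrow.homMk'_left, Arrow.homMk'_right, Arrow.mk_hom, Arrow.mk_left,
      Arrow.mk_right, Functor.id_obj] at hP₀ e1 e2
    exact comp_indep hE1 hE3 hP₀ (IsPullback.of_hasPullback σ.right.left b.hom.left)
      (e1.trans lamL_f.symm) (e2.trans lamL_s.symm) hEl₀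
  -- E-membership of lamR via (E5) applied to the right face
  have hElr : E lamR := by
    have hsec : Arrow.homMk' _ _ tface_r ≫ Arrow.homMk' _ _ face_r = 𝟙 (Arrow.mk b.hom.right) := by
      apply Arrow.hom_ext
      · simpa using hll_r
      · simpa using hrr_r
    obtain ⟨_, _, _, _, P₀, π₁, π₂, l₀, hP₀, e1, e2, hEl₀⟩ :=
      hE5 (Arrow.homMk' _ _ face_r) (Arrow.homMk' _ _ tface_r) hsec ha.2.2.2.1 hb.2.2.2.1
    simp only [Arrow.homMk'_left, Arrow.homMk'_right, Arrow.mk_hom, Arrow.mk_left,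
      Arrow.mk_right, Functor.id_obj] at hP₀ e1 e2
    exact comp_indep hE1 hE3 hP₀ (IsPullback.of_hasPullback σ.right.right b.hom.right)
      (e1.trans lamR_f.symm) (e2.trans lamR_s.symm) hEl₀
  -- the comparison squares of a.hom and b.hom
  obtain ⟨hEal, hEar, hEahl, hEahr, Pa, pa₁, pa₂, la, hPa, ha1, ha2, hEla⟩ := ha
  obtain ⟨hEbl, hEbr, hEbhl, hEbhr, Pb, pb₁, pb₂, lb, hPb, hb1, hb2, hElb⟩ := hb
  -- induced morphisms between the comparison pullbacks
  have wρ : (pa₁ ≫ σ.left.right) ≫ b.hom.right = (pa₂ ≫ σ.right.left) ≫ b.right.hom := by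
    rw [Category.assoc, face_r, ← Category.assoc, hPa.w, Category.assoc, ← Arrow.w σ.right,
      ← Category.assoc]
  set ρ : Pa ⟶ Pb := hPb.lift (pa₁ ≫ σ.left.right) (pa₂ ≫ σ.right.left) wρ with hρ_def
  have ρ_f : ρ ≫ pb₁ = pa₁ ≫ σ.left.right := IsPullback.lift_fst _ _ _ _
  have ρ_s : ρ ≫ pb₂ = pa₂ ≫ σ.right.left := IsPullback.lift_snd _ _ _ _
  have wρ' : (pb₁ ≫ τ.left.right) ≫ a.hom.right = (pb₂ ≫ τ.right.left) ≫ a.right.hom := by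
    rw [Category.assoc, tface_r, ← Category.assoc, hPb.w, Category.assoc, ← Arrow.w τ.right,
      ← Category.assoc]
  set ρ' : Pb ⟶ Pa := hPa.lift (pb₁ ≫ τ.left.right) (pb₂ ≫ τ.right.left) wρ' with hρ'_def
  have ρ'_f : ρ' ≫ pa₁ = pb₁ ≫ τ.left.right := IsPullback.lift_fst _ _ _ _
  have ρ'_s : ρ' ≫ pa₂ = pb₂ ≫ τ.right.left := IsPullback.lift_snd _ _ _ _
  -- the split epimorphism of comparison extensions
  have wΛ : σ.left.left ≫ lb = la ≫ ρ := by
    apply hPb.hom_ext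
    · rw [Category.assoc, hb1, Category.assoc, ρ_f, ← Category.assoc, ha1, Arrow.w σ.left]
    · rw [Category.assoc, hb2, Category.assoc, ρ_s, ← Category.assoc, ha2, face_l]
  have wΛ' : τ.left.left ≫ la = lb ≫ ρ' := by
    apply hPa.hom_ext
    · rw [Category.assoc, ha1, Category.assoc, ρ'_f, ← Category.assoc, hb1, Arrow.w τ.left]
    · rw [Category.assoc, ha2, Category.assoc, ρ'_s, ← Category.assoc, hb2, tface_l]
  have hsecΛ : Arrow.homMk' _ _ wΛ' ≫ Arrow.homMk' _ _ wΛ = 𝟙 (Arrow.mk lb) := by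
    apply Arrow.hom_ext
    · simpa using hll_l
    · show ρ' ≫ ρ = 𝟙 Pb
      apply hPb.hom_ext
      · rw [Category.assoc, ρ_f, ← Category.assoc, ρ'_f, Category.assoc, hll_r]
        simp
      · rw [Category.assoc, ρ_s, ← Category.assoc, ρ'_s, Category.assoc, hrr_l]
        simp
  obtain ⟨_, _, _, _, P', π₁, π₂, cc, hP', hc1, hc2, hEcc⟩ :=
    hE5 (Arrow.homMk' _ _ wΛ) (Arrow.homMk' _ _ wΛ') hsecΛ hEla hElb
  simp only [Arrow.homMk'_left, Arrow.homMk'_right, Arrow.mk_hom, Arrow.mk_left,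
    Arrow.mk_right, Functor.id_obj] at hP' hc1 hc2
  -- hP' : IsPullback π₁ π₂ ρ lb, hc1 : cc ≫ π₁ = la, hc2 : cc ≫ π₂ = σ.left.left
  -- the pullback witnessing the comparison condition for lam
  have hQpb : IsPullback (pullback.fst lamR (pbHom σ.right b.hom))
      (pullback.snd lamR (pbHom σ.right b.hom)) lamR (pbHom σ.right b.hom) :=
    IsPullback.of_hasPullback _ _
  set q₁ := pullback.fst lamR (pbHom σ.right b.hom) with hq₁_def
  set q₂ := pullback.snd lamR (pbHom σ.right b.hom) with hq₂_def
  have hqcond : q₁ ≫ lamR = q₂ ≫ pbHom σ.right b.hom := pullback.condition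
  have hq_f : q₁ ≫ a.hom.right = q₂ ≫ fstL ≫ a.right.hom := by
    have h2 : q₁ ≫ lamR ≫ fstR = q₂ ≫ pbHom σ.right b.hom ≫ fstR := by
      rw [← Category.assoc, hqcond, Category.assoc]
    rwa [lamR_f, pbh_f] at h2
  have hq_s : q₁ ≫ σ.left.right = q₂ ≫ sndL ≫ b.left.hom := by
    have h2 : q₁ ≫ lamR ≫ sndR = q₂ ≫ pbHom σ.right b.hom ≫ sndR := by
      rw [← Category.assoc, hqcond, Category.assoc]
    rwa [lamR_s, pbh_s] at h2
  set κ : a.left.left ⟶ pullback lamR (pbHom σ.right b.hom) :=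
    pullback.lift a.left.hom lamL wlam.symm with hκ_def
  have κ_f : κ ≫ q₁ = a.left.hom := pullback.lift_fst _ _ _
  have κ_s : κ ≫ q₂ = lamL := pullback.lift_snd _ _ _
  -- the inverse pair of comparisons between P' and the pullback Q
  have weL : (π₁ ≫ pa₂) ≫ σ.right.left = π₂ ≫ b.hom.left := by
    have h2 : π₁ ≫ ρ ≫ pb₂ = π₂ ≫ lb ≫ pb₂ := by
      rw [← Category.assoc, hP'.w, Category.assoc]
    rwa [ρ_s, hb2, ← Category.assoc] at h2
  set eL : P' ⟶ pullback σ.right.left b.hom.left := pullback.lift (π₁ ≫ pa₂) π₂ weL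
    with heL_def
  have eL_f : eL ≫ fstL = π₁ ≫ pa₂ := pullback.lift_fst _ _ _
  have eL_s : eL ≫ sndL = π₂ := pullback.lift_snd _ _ _
  have hP'w1 : π₁ ≫ pa₁ ≫ σ.left.right = π₂ ≫ b.left.hom := by
    have h2 : π₁ ≫ ρ ≫ pb₁ = π₂ ≫ lb ≫ pb₁ := by
      rw [← Category.assoc, hP'.w, Category.assoc]
    rwa [ρ_f, hb1] at h2
  have weQ : (π₁ ≫ pa₁) ≫ lamR = eL ≫ pbHom σ.right b.hom := by
    apply pullback.hom_ext
    · rw [Category.assoc, lamR_f, Category.assoc, hPa.w, Category.assoc, pbh_f,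
        ← Category.assoc, ← Category.assoc, eL_f]
    · rw [Category.assoc, lamR_s, Category.assoc, hP'w1, Category.assoc, pbh_s,
        ← Category.assoc, eL_s]
  set e' : P' ⟶ pullback lamR (pbHom σ.right b.hom) := pullback.lift (π₁ ≫ pa₁) eL weQ
    with he'_def
  have e'_f : e' ≫ q₁ = π₁ ≫ pa₁ := pullback.lift_fst _ _ _
  have e'_s : e' ≫ q₂ = eL := pullback.lift_snd _ _ _
  have wwa : q₁ ≫ a.hom.right = (q₂ ≫ fstL) ≫ a.right.hom := by
    rw [Category.assoc]; exact hq_f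
  set wam : pullback lamR (pbHom σ.right b.hom) ⟶ Pa := hPa.lift q₁ (q₂ ≫ fstL) wwa
    with hwam_def
  have wam_f : wam ≫ pa₁ = q₁ := IsPullback.lift_fst _ _ _ _
  have wam_s : wam ≫ pa₂ = q₂ ≫ fstL := IsPullback.lift_snd _ _ _ _
  have wwe : wam ≫ ρ = (q₂ ≫ sndL) ≫ lb := by
    apply hPb.hom_ext
    · rw [Category.assoc, Category.assoc, ρ_f, ← Category.assoc, wam_f, Category.assoc,
        hb1, hq_s]
    · rw [Category.assoc, Category.assoc, ρ_s, ← Category.assoc, wam_s, Category.assoc,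
        hb2, Category.assoc, condL]
  set e : pullback lamR (pbHom σ.right b.hom) ⟶ P' := hP'.lift wam (q₂ ≫ sndL) wwe
    with he_def
  have e_f : e ≫ π₁ = wam := IsPullback.lift_fst _ _ _ _
  have e_s : e ≫ π₂ = q₂ ≫ sndL := IsPullback.lift_snd _ _ _ _
  have hee' : e' ≫ e = 𝟙 P' := by
    apply hP'.hom_ext
    · rw [Category.assoc, e_f, Category.id_comp]
      apply hPa.hom_ext
      · rw [Category.assoc, wam_f, e'_f]
      · rw [Category.assoc, wam_s, ← Category.assoc, e'_s, eL_f]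
    · rw [Category.assoc, e_s, Category.id_comp, ← Category.assoc, e'_s, eL_s]
  have he'e : e ≫ e' = 𝟙 (pullback lamR (pbHom σ.right b.hom)) := by
    apply pullback.hom_ext
    · rw [Category.assoc, e'_f, ← Category.assoc, e_f, wam_f, Category.id_comp]
    · rw [Category.assoc, e'_s, Category.id_comp]
      apply pullback.hom_ext
      · rw [Category.assoc, eL_f, ← Category.assoc, e_f, wam_s]
      · rw [Category.assoc, eL_s, e_s]
  have hIso : IsIso e' := ⟨e, hee', he'e⟩
  have hκcc : κ = cc ≫ e' := by
    apply pullback.hom_ext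
    · rw [κ_f, Category.assoc, e'_f, ← Category.assoc, hc1, ha1]
    · rw [κ_s, Category.assoc, e'_s]
      apply pullback.hom_ext
      · rw [lamL_f, Category.assoc, eL_f, ← Category.assoc, hc1, ha2]
      · rw [lamL_s, Category.assoc, eL_s, hc2]
  have hEκ : E κ := by
    rw [hκcc]; exact hE3 _ _ hEcc (hE1 e' trivial trivial hIso)
  -- assemble the double extension structure of lam
  have hElam : InE1 E lam := by
    refine ⟨hEal, ?_, hEll, hElr, pullback lamR (pbHom σ.right b.hom), q₁, q₂, κ, hQpb,
      κ_f, κ_s, hEκ⟩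
    exact (pb_spec σ.right b.hom hE1 hE2 hE3 hσr hEbl).1
  -- conclude
  refine ⟨ha', hb', hσl, hσr, pbObj σ.right b.hom, pbQ₁ σ.right b.hom, pbQ₂ σ.right b.hom,
    lam, pb_isPullback σ.right b.hom, ?_, ?_, hElam⟩
  · apply Arrow.hom_ext
    · exact lamL_f
    · exact lamR_f
  · apply Arrow.hom_ext
    · exact lamL_s
    · exact lamR_s

end Statement13Aux

/-- If a class `E` on a finitely complete category satisfies
(E1)-(E5), then the class `E¹` of double extensions, as a class of morphisms of
`Ext(C)` (here: of the arrow category, with objecthood given by `E`), also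
satisfies (E1)-(E5), with `(E¹)¹` in place of `E¹` in condition (E5). -/
theorem statement_13 {C : Type u} [Category.{v} C] [HasFiniteLimits C]
    (E : MorphismProperty C)
    (hE1 : CondE1 (fun _ => True) E) (hE2 : CondE2 (fun _ => True) E)
    (hE3 : CondE3 E) (hE4 : CondE4 (fun _ => True) E) (hE5 : CondE5 E) :
    CondE1 (fun x : Arrow C => E x.hom) (InE1 E) ∧
      CondE2 (fun x : Arrow C => E x.hom) (InE1 E) ∧
      CondE3 (InE1 E) ∧
      CondE4 (fun x : Arrow C => E x.hom) (InE1 E) ∧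
      CondE5 (InE1 E) := by
  refine ⟨?_, condE2' E hE1 hE2 hE3, condE3' E hE2 hE3, condE4' E hE1 hE2 hE3 hE4 hE5,
    condE5' E hE1 hE2 hE3 hE5⟩
  intro a b σ ha hb hiso
  haveI := hiso
  exact hE5 σ (inv σ) (IsIso.inv_hom_id σ) ha hb

end GaloisPaper
end
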